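/- arXiv:2006.06847 — 3 statements merged into one kernel-verified Lean document; each statement's English description precedes it below -/
import Mathlib

section
/- For every n ∈ ℕ and all x, y ∈ 𝕊, the infimum defining d_n(x,y) (respectively d_Δ(x,y)) is unchanged if it is taken only over minimal chains of dyadic arcs joining x to y, where a chain {I_i} is minimal if its intervals have pairwise disjoint interiors and no union of at least two distinct intervals from the chain equals a dyadic arc. -/
noncomputable section

instance : Fact ((0 : ℝ) < 1) := ⟨one_pos⟩

/-- The closed dyadic arc of level `n` and index `j` in the circle `𝕊 = [0,1]/{0,1}`,
realized as `AddCircle (1 : ℝ)`: the image of `[j/2^n, (j+1)/2^n]`. -/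
def dyadicArc (n j : ℕ) : Set (AddCircle (1 : ℝ)) :=
  (fun r : ℝ => (r : AddCircle (1 : ℝ))) '' Set.Icc ((j : ℝ) / 2 ^ n) (((j : ℝ) + 1) / 2 ^ n)

/-- The left endpoint of the dyadic arc of level `n` and index `j`. -/
def leftPt (n j : ℕ) : AddCircle (1 : ℝ) := (((j : ℝ) / 2 ^ n : ℝ) : AddCircle (1 : ℝ))

/-- The right endpoint of the dyadic arc of level `n` and index `j`. -/
def rightPt (n j : ℕ) : AddCircle (1 : ℝ) := ((((j : ℝ) + 1) / 2 ^ n : ℝ) : AddCircle (1 : ℝ))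

/-- `Δ` (given as a function of the level `n` and the index `j < 2^n` of a dyadic arc) is a
dyadic diameter function of type `𝒮₁`: `Δ(𝕊) = 1`, `Δ` is positive, the two children of any
dyadic arc have equal `Δ`-value, which is either half of or equal to that of their parent,
and `max {Δ(I) : I ∈ ℐ_n} → 0` as `n → ∞`. -/
def IsS1 (Δ : ℕ → ℕ → ℝ) : Prop :=
  Δ 0 0 = 1 ∧
  (∀ n j : ℕ, j < 2 ^ n → 0 < Δ n j) ∧
  (∀ n j : ℕ, j < 2 ^ n → Δ (n + 1) (2 * j) = Δ (n + 1) (2 * j + 1) ∧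
    (Δ (n + 1) (2 * j) = Δ n j / 2 ∨ Δ (n + 1) (2 * j) = Δ n j)) ∧
  (∀ ε : ℝ, 0 < ε → ∃ N : ℕ, ∀ n ≥ N, ∀ j < 2 ^ n, Δ n j < ε)

/-- `c` is a chain of dyadic arcs (given by level-index pairs) joining `x` to `y`:
all indices are valid, the union of the arcs is connected, and it contains `x` and `y`. -/
def IsDyadicChain (N : ℕ) (c : Fin (N + 1) → ℕ × ℕ) (x y : AddCircle (1 : ℝ)) : Prop :=
  (∀ k, (c k).2 < 2 ^ (c k).1) ∧
  IsConnected (⋃ k, dyadicArc (c k).1 (c k).2) ∧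
  x ∈ ⋃ k, dyadicArc (c k).1 (c k).2 ∧ y ∈ ⋃ k, dyadicArc (c k).1 (c k).2

/-- The set of sums `Σ Δ'(J_k)` over all chains of dyadic arcs joining `x` and `y`. -/
def chainSums (Δ' : ℕ → ℕ → ℝ) (x y : AddCircle (1 : ℝ)) : Set ℝ :=
  {s | ∃ (N : ℕ) (c : Fin (N + 1) → ℕ × ℕ), IsDyadicChain N c x y ∧
    s = ∑ k, Δ' (c k).1 (c k).2}

/-- The distance associated to a weight `Δ'` on dyadic arcs:
`d(x,y) = inf Σ Δ'(J_k)` over all chains of dyadic arcs joining `x` and `y`. -/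
def dOf (Δ' : ℕ → ℕ → ℝ) (x y : AddCircle (1 : ℝ)) : ℝ := sInf (chainSums Δ' x y)

/-- The truncation `Δ_n` of `Δ`: `Δ_n(I) = Δ(I)` for arcs of level `≤ n`, and
`Δ_n(I) = ½ Δ_n(parent of I)` for arcs of level `> n`. -/
def trunc (Δ : ℕ → ℕ → ℝ) (n : ℕ) : ℕ → ℕ → ℝ := fun m j =>
  if m ≤ n then Δ m j else Δ n (j / 2 ^ (m - n)) / 2 ^ (m - n)

/-- A chain of dyadic arcs is minimal if the arcs have pairwise disjoint interiors and no
union of at least two distinct arcs from the chain equals a dyadic arc. -/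
def IsMinimalChain (N : ℕ) (c : Fin (N + 1) → ℕ × ℕ) : Prop :=
  (∀ k l : Fin (N + 1), k ≠ l →
    interior (dyadicArc (c k).1 (c k).2) ∩ interior (dyadicArc (c l).1 (c l).2) = ∅) ∧
  (∀ T : Finset (Fin (N + 1)), 2 ≤ T.card →
    ¬∃ m j : ℕ, j < 2 ^ m ∧ (⋃ k ∈ T, dyadicArc (c k).1 (c k).2) = dyadicArc m j)

/-- The set of sums `Σ Δ'(J_k)` over all minimal chains of dyadic arcs joining `x` and `y`. -/
def minChainSums (Δ' : ℕ → ℕ → ℝ) (x y : AddCircle (1 : ℝ)) : Set ℝ :=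
  {s | ∃ (N : ℕ) (c : Fin (N + 1) → ℕ × ℕ), IsDyadicChain N c x y ∧ IsMinimalChain N c ∧
    s = ∑ k, Δ' (c k).1 (c k).2}

namespace DA

lemma coe_eq_coe {s t : ℝ} : (s : AddCircle (1:ℝ)) = t ↔ ∃ k : ℤ, t - s = k := by
  rw [QuotientAddGroup.eq]
  simp [AddSubgroup.mem_zmultiples_iff, eq_comm, sub_eq_iff_eq_add]
  constructor
  · rintro ⟨k, hk⟩; exact ⟨k, by linarith⟩
  · rintro ⟨k, hk⟩; exact ⟨k, by linarith⟩

/-- K1: membership for a representative strictly inside (0,1). -/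
lemma mem_image_Icc_iff {t a b : ℝ} (ht0 : 0 < t) (ht1 : t < 1) (ha : 0 ≤ a) (hb : b ≤ 1) :
    ((t : AddCircle (1:ℝ)) ∈ (fun r : ℝ => (r : AddCircle (1:ℝ))) '' Set.Icc a b) ↔ t ∈ Set.Icc a b := by
  constructor
  · rintro ⟨s, hs, hst⟩
    rcases coe_eq_coe.1 hst with ⟨k, hk⟩
    have h1 : -1 < (k:ℝ) := by
      have := hs.1; have := hs.2; linarith
    have h2 : (k:ℝ) < 1 := by
      have := hs.1; have := hs.2; linarith
    have hk0 : k = 0 := by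
      have h1' : (-1:ℤ) < k := by exact_mod_cast h1
      have h2' : k < 1 := by exact_mod_cast h2
      omega
    rw [hk0] at hk; push_cast at hk
    have : s = t := by linarith
    rwa [this] at hs
  · intro h; exact ⟨t, h, rfl⟩

end DA

namespace DA
open Set

lemma two_pow_pos (m : ℕ) : (0:ℝ) < 2 ^ m := by positivity

lemma ep_nonneg (m j : ℕ) : (0:ℝ) ≤ (j:ℝ) / 2 ^ m := by positivity

lemma ep_le_one {m j : ℕ} (h : j < 2 ^ m) : ((j:ℝ) + 1) / 2 ^ m ≤ 1 := by
  rw [div_le_one (two_pow_pos m)]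
  have : (j:ℝ) + 1 ≤ ((2:ℝ))^m := by exact_mod_cast Nat.succ_le_of_lt h
  simpa using this

lemma ep_lt (m j : ℕ) : (j:ℝ) / 2 ^ m < ((j:ℝ) + 1) / 2 ^ m := by
  have h := two_pow_pos m
  rw [div_lt_div_iff₀ h h]; nlinarith

lemma mem_arc_iff {m j : ℕ} (hj : j < 2 ^ m) {t : ℝ} (ht0 : 0 < t) (ht1 : t < 1) :
    ((t : AddCircle (1:ℝ)) ∈ dyadicArc m j) ↔ t ∈ Set.Icc ((j:ℝ) / 2 ^ m) (((j:ℝ) + 1) / 2 ^ m) :=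
  mem_image_Icc_iff ht0 ht1 (ep_nonneg m j) (ep_le_one hj)

lemma mem_arc_of_mem_Icc {m j : ℕ} {t : ℝ}
    (h : t ∈ Set.Icc ((j:ℝ) / 2 ^ m) (((j:ℝ) + 1) / 2 ^ m)) :
    (t : AddCircle (1:ℝ)) ∈ dyadicArc m j := ⟨t, h, rfl⟩

lemma arc_subset_arc {m j m' j' : ℕ}
    (h1 : (j:ℝ) / 2 ^ m ≤ (j':ℝ) / 2 ^ m') (h2 : ((j':ℝ) + 1) / 2 ^ m' ≤ ((j:ℝ) + 1) / 2 ^ m) :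
    dyadicArc m' j' ⊆ dyadicArc m j :=
  Set.image_mono (Set.Icc_subset_Icc h1 h2)

lemma arc_split (m j : ℕ) :
    dyadicArc m j = dyadicArc (m+1) (2*j) ∪ dyadicArc (m+1) (2*j+1) := by
  unfold dyadicArc
  rw [← Set.image_union]
  have hp := two_pow_pos m
  have e1 : ((2*j : ℕ):ℝ) / 2 ^ (m+1) = (j:ℝ) / 2^m := by
    push_cast; rw [pow_succ]; field_simp
  have e2 : (((2*j : ℕ):ℝ)+1) / 2 ^ (m+1) = ((2*j+1 : ℕ):ℝ) / 2^(m+1) := by push_cast; ring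
  have e3 : (((2*j+1 : ℕ):ℝ)+1) / 2 ^ (m+1) = ((j:ℝ)+1) / 2^m := by
    push_cast; rw [pow_succ]; field_simp; ring
  rw [e1, e2, e3, Set.Icc_union_Icc_eq_Icc]
  · rw [pow_succ]; push_cast; rw [div_le_div_iff₀ (by positivity) (by positivity)]; nlinarith
  · rw [pow_succ]; push_cast; rw [div_le_div_iff₀ (by positivity) (by positivity)]; nlinarith

end DA

namespace DA
open Set

/-- arc ⊆ ancestor -/
lemma arc_subset_ancestor : ∀ (k m j : ℕ), dyadicArc (m+k) j ⊆ dyadicArc m (j / 2^k) := by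
  intro k
  induction k with
  | zero => intro m j; simp [Nat.div_one]
  | succ k ih =>
    intro m j
    have h1 : dyadicArc (m+(k+1)) j ⊆ dyadicArc (m+k) (j/2) := by
      have hsplit := arc_split (m+k) (j/2)
      rcases Nat.even_or_odd j with ⟨r, hr⟩ | ⟨r, hr⟩
      · have : j = 2 * (j/2) := by omega
        rw [hsplit]
        intro z hz; left
        have : dyadicArc (m+k+1) (2*(j/2)) = dyadicArc (m+(k+1)) j := by rw [← this]; rfl
        rw [this]; exact hz
      · have hjj : j = 2 * (j/2) + 1 := by omega
        rw [hsplit]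
        intro z hz; right
        have : dyadicArc (m+k+1) (2*(j/2)+1) = dyadicArc (m+(k+1)) j := by rw [← hjj]; rfl
        rw [this]; exact hz
    refine h1.trans ?_
    have : j / 2 / 2 ^ k = j / 2 ^ (k+1) := by
      rw [Nat.div_div_eq_div_mul, pow_succ']
    rw [← this]
    exact ih m (j/2)

lemma arc_zero : dyadicArc 0 0 = Set.univ := by
  ext z
  simp only [Set.mem_univ, iff_true]
  induction z using QuotientAddGroup.induction_on with
  | H t =>
    refine ⟨Int.fract t, ?_, ?_⟩
    · simp only [Set.mem_Icc]
      constructor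
      · simpa using (Int.fract_nonneg t)
      · have := (Int.fract_lt_one t).le; simpa using this
    · show ((Int.fract t : ℝ) : AddCircle (1:ℝ)) = (t : AddCircle (1:ℝ))
      rw [coe_eq_coe]
      exact ⟨⌊t⌋, by rw [Int.self_sub_fract]⟩

lemma arc_ne_univ {m j : ℕ} (hm : 1 ≤ m) (hj : j < 2^m) : dyadicArc m j ≠ Set.univ := by
  set a := (j:ℝ)/2^m with ha
  set b := ((j:ℝ)+1)/2^m with hb
  have hba : b - a = 1/2^m := by rw [ha, hb]; ring
  have h2m : (2:ℝ) ≤ 2^m := by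
    calc (2:ℝ) = 2^1 := by norm_num
    _ ≤ 2^m := by apply pow_le_pow_right₀ (by norm_num) hm
  have hb2 : b - a ≤ 1/2 := by
    rw [hba]
    rw [div_le_div_iff₀ (by positivity) (by norm_num)]
    linarith
  have h0a : 0 ≤ a := ep_nonneg m j
  have hb1 : b ≤ 1 := ep_le_one hj
  have hab : a < b := ep_lt m j
  -- pick t in (0,1) outside [a,b]
  intro hu
  by_cases h : a = 0
  · -- take t = (b+1)/2
    have ht : ((((b+1)/2 : ℝ)) : AddCircle (1:ℝ)) ∈ dyadicArc m j := hu ▸ Set.mem_univ _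
    rw [mem_arc_iff hj (by rw [h] at hab; linarith) (by linarith)] at ht
    rw [Set.mem_Icc] at ht
    rcases ht with ⟨_, h2⟩
    rw [h] at hb2; linarith
  · have ha0 : 0 < a := lt_of_le_of_ne h0a (Ne.symm h)
    have ht : (((a/2 : ℝ)) : AddCircle (1:ℝ)) ∈ dyadicArc m j := hu ▸ Set.mem_univ _
    rw [mem_arc_iff hj (by linarith) (by linarith)] at ht
    rw [Set.mem_Icc] at ht
    rcases ht with ⟨h1, _⟩
    linarith

/-- same-level containment forces equal indices -/
lemma level_eq_of_subset {m j1 j2 : ℕ} (h1 : j1 < 2^m) (h2 : j2 < 2^m)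
    (hsub : dyadicArc m j1 ⊆ dyadicArc m j2) : j1 = j2 := by
  by_contra hne
  set a1 := (j1:ℝ)/2^m; set b1 := ((j1:ℝ)+1)/2^m
  have hab : a1 < b1 := ep_lt m j1
  set t := (a1+b1)/2 with htdef
  have ht1 : t ∈ Set.Ioo a1 b1 := ⟨by rw [htdef]; linarith, by rw [htdef]; linarith⟩
  have h0a : (0:ℝ) ≤ a1 := ep_nonneg m j1
  have hb1' : b1 ≤ 1 := ep_le_one h1
  have htm : ((t:ℝ) : AddCircle (1:ℝ)) ∈ dyadicArc m j1 :=
    mem_arc_of_mem_Icc ⟨ht1.1.le, ht1.2.le⟩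
  have := hsub htm
  rw [mem_arc_iff h2 (by linarith [ht1.1]) (by linarith [ht1.2])] at this
  rw [Set.mem_Icc] at this
  have hp := two_pow_pos m
  rcases Nat.lt_or_ge j1 j2 with h | h
  · have hle : ((j1:ℝ)+1)/2^m ≤ (j2:ℝ)/2^m := by
      gcongr
      exact_mod_cast Nat.succ_le_of_lt h
    have := this.1
    have := ht1.2
    simp only [b1] at *
    linarith
  · have hne' : j2 < j1 := lt_of_le_of_ne h (Ne.symm hne)
    have hle : ((j2:ℝ)+1)/2^m ≤ (j1:ℝ)/2^m := by
      gcongr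
      exact_mod_cast Nat.succ_le_of_lt hne'
    have := this.2
    have := ht1.1
    simp only [a1] at *
    linarith

end DA

namespace DA
open Set

lemma anc_real {q j j' : ℕ} (h : j'/2^q = j) (m : ℕ) :
    (j:ℝ)/2^m ≤ (j':ℝ)/2^(m+q) ∧ ((j':ℝ)+1)/2^(m+q) ≤ ((j:ℝ)+1)/2^m := by
  have h1 : j * 2^q ≤ j' := by
    have := Nat.div_mul_le_self j' (2^q); rw [h] at this; exact this
  have h2 : j' < (j+1) * 2^q := by
    rw [← Nat.div_lt_iff_lt_mul (Nat.two_pow_pos q)]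
    omega
  have h1' : (j:ℝ) * 2^q ≤ (j':ℝ) := by exact_mod_cast h1
  have h2' : (j':ℝ) + 1 ≤ ((j:ℝ)+1) * 2^q := by
    have : (j' + 1 : ℕ) ≤ (j+1) * 2^q := h2
    exact_mod_cast this
  constructor
  · rw [pow_add, div_le_div_iff₀ (by positivity) (by positivity)]
    nlinarith [two_pow_pos m, two_pow_pos q]
  · rw [pow_add, div_le_div_iff₀ (by positivity) (by positivity)]
    nlinarith [two_pow_pos m, two_pow_pos q]

lemma arc_subset_ancestor' {m m' j' : ℕ} (h : m ≤ m') :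
    dyadicArc m' j' ⊆ dyadicArc m (j' / 2^(m'-m)) := by
  have := arc_subset_ancestor (m'-m) m j'
  rwa [Nat.add_sub_cancel' h] at this

/-- containment determines the level-m ancestor -/
lemma ancestor_index_eq {m m' j j' : ℕ} (hm : m ≤ m') (hj : j < 2^m) (hj' : j' < 2^m')
    (hsub : dyadicArc m' j' ⊆ dyadicArc m j) : j' / 2^(m'-m) = j := by
  set j2 := j' / 2^(m'-m) with hj2def
  have hj2 : j2 < 2^m := by
    have : j' < 2^m * 2^(m'-m) := by rw [← pow_add, Nat.add_sub_cancel' hm]; exact hj'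
    rw [hj2def]
    exact Nat.div_lt_of_lt_mul (by rw [Nat.mul_comm] at this; exact this)
  by_contra hne
  have hsub2 : dyadicArc m' j' ⊆ dyadicArc m j2 := arc_subset_ancestor' hm
  set a' := (j':ℝ)/2^m' with ha'
  set b' := ((j':ℝ)+1)/2^m' with hb'
  have hab' : a' < b' := ep_lt m' j'
  have h0 : (0:ℝ) ≤ a' := ep_nonneg m' j'
  have h1 : b' ≤ 1 := ep_le_one hj'
  -- two points
  have key : ∀ t : ℝ, t ∈ Set.Ioo a' b' →
      ((j:ℝ)/2^m ≤ t ∧ t ≤ ((j:ℝ)+1)/2^m) ∧ ((j2:ℝ)/2^m ≤ t ∧ t ≤ ((j2:ℝ)+1)/2^m) := by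
    intro t ht
    have ht0 : 0 < t := lt_of_le_of_lt h0 ht.1
    have ht1 : t < 1 := lt_of_lt_of_le ht.2 h1
    have hmem : ((t:ℝ) : AddCircle (1:ℝ)) ∈ dyadicArc m' j' :=
      mem_arc_of_mem_Icc ⟨ht.1.le, ht.2.le⟩
    have hm1 := (mem_arc_iff hj ht0 ht1).1 (hsub hmem)
    have hm2 := (mem_arc_iff hj2 ht0 ht1).1 (hsub2 hmem)
    rw [Set.mem_Icc] at hm1 hm2
    exact ⟨hm1, hm2⟩
  obtain ⟨⟨p1, p2⟩, ⟨p3, p4⟩⟩ := key (a' + (b'-a')/3) ⟨by linarith, by linarith⟩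
  obtain ⟨⟨q1, q2⟩, ⟨q3, q4⟩⟩ := key (a' + 2*(b'-a')/3) ⟨by linarith, by linarith⟩
  rcases Nat.lt_or_ge j j2 with h | h
  · have hle : ((j:ℝ)+1)/2^m ≤ (j2:ℝ)/2^m := by
      gcongr; exact_mod_cast Nat.succ_le_of_lt h
    linarith
  · have h' : j2 < j := lt_of_le_of_ne h hne
    have hle : ((j2:ℝ)+1)/2^m ≤ (j:ℝ)/2^m := by
      gcongr; exact_mod_cast Nat.succ_le_of_lt h'
    linarith

/-- injectivity of dyadicArc on valid indices -/
lemma arc_inj {m m' j j' : ℕ} (hj : j < 2^m) (hj' : j' < 2^m')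
    (h : dyadicArc m j = dyadicArc m' j') : m = m' ∧ j = j' := by
  -- first a helper for the wlog m ≤ m' case
  suffices H : ∀ m m' j j' : ℕ, j < 2^m → j' < 2^m' → m ≤ m' →
      dyadicArc m j = dyadicArc m' j' → m = m' ∧ j = j' by
    rcases le_total m m' with hmm | hmm
    · exact H m m' j j' hj hj' hmm h
    · obtain ⟨h1, h2⟩ := H m' m j' j hj' hj hmm h.symm
      exact ⟨h1.symm, h2.symm⟩
  clear hj hj' h m m' j j'
  intro m m' j j' hj hj' hmm h
  have hanc : j' / 2^(m'-m) = j :=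
    ancestor_index_eq hmm hj hj' (h.symm.subset)
  rcases eq_or_lt_of_le hmm with heq | hlt
  · subst heq
    simp only [Nat.sub_self, pow_zero, Nat.div_one] at hanc
    exact ⟨rfl, hanc.symm⟩
  · exfalso
    -- real endpoints
    obtain ⟨hr1, hr2⟩ := anc_real hanc m
    rw [Nat.add_sub_cancel' hmm] at hr1 hr2
    set a := (j:ℝ)/2^m with ha
    set b := ((j:ℝ)+1)/2^m with hb
    set a' := (j':ℝ)/2^m' with ha'
    set b' := ((j':ℝ)+1)/2^m' with hb'
    have hlen : b - a = 1/2^m := by rw [ha, hb]; ring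
    have hlen' : b' - a' = 1/2^m' := by rw [ha', hb']; ring
    have hll : (1:ℝ)/2^m' < 1/2^m := by
      rw [div_lt_div_iff₀ (by positivity) (by positivity)]
      have : (2:ℝ)^m < 2^m' := by
        apply pow_lt_pow_right₀ (by norm_num) hlt
      linarith
    have h0 : (0:ℝ) ≤ a := ep_nonneg m j
    have hb1 : b ≤ 1 := ep_le_one hj
    have hab : a < b := ep_lt m j
    have hab' : a' < b' := ep_lt m' j'
    -- a < a' or b' < b
    rcases lt_or_ge a a' with hc | hc
    · set t := (a + a')/2 with htd
      have ht : t ∈ Set.Ioo a b := ⟨by rw [htd]; linarith, by rw [htd]; nlinarith [hr2]⟩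
      have ht0 : 0 < t := lt_of_le_of_lt h0 ht.1
      have ht1 : t < 1 := lt_of_lt_of_le ht.2 hb1
      have hmem : ((t:ℝ) : AddCircle (1:ℝ)) ∈ dyadicArc m j :=
        mem_arc_of_mem_Icc ⟨ht.1.le, ht.2.le⟩
      rw [h] at hmem
      have := (mem_arc_iff hj' ht0 ht1).1 hmem
      rw [Set.mem_Icc] at this
      have : a' ≤ t := this.1
      rw [htd] at this; linarith
    · have hc' : a = a' := le_antisymm hr1 hc
      have hbb : b' < b := by linarith
      set t := (b' + b)/2 with htd
      have ht : t ∈ Set.Ioo a b := ⟨by rw [htd]; linarith, by rw [htd]; linarith⟩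
      have ht0 : 0 < t := lt_of_le_of_lt h0 ht.1
      have ht1 : t < 1 := lt_of_lt_of_le ht.2 hb1
      have hmem : ((t:ℝ) : AddCircle (1:ℝ)) ∈ dyadicArc m j :=
        mem_arc_of_mem_Icc ⟨ht.1.le, ht.2.le⟩
      rw [h] at hmem
      have := (mem_arc_iff hj' ht0 ht1).1 hmem
      rw [Set.mem_Icc] at this
      have : t ≤ b' := this.2
      rw [htd] at this; linarith

end DA

namespace DA
open Set

/-- A proper dyadic subarc lies in one of the two children. -/
lemma proper_subset_child {m j m' j' : ℕ} (hj : j < 2^m) (hj' : j' < 2^m')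
    (hsub : dyadicArc m' j' ⊆ dyadicArc m j) (hne : dyadicArc m' j' ≠ dyadicArc m j) :
    m + 1 ≤ m' ∧ (j' / 2^(m'-(m+1))) / 2 = j ∧ j' / 2^(m'-(m+1)) < 2^(m+1) ∧
      dyadicArc m' j' ⊆ dyadicArc (m+1) (j' / 2^(m'-(m+1))) := by
  have hmm : m < m' := by
    by_contra hle
    push_neg at hle
    have h2 : dyadicArc m j ⊆ dyadicArc m' (j / 2^(m-m')) := arc_subset_ancestor' hle
    have hv : j / 2^(m-m') < 2^m' := by
      have : j < 2^m' * 2^(m-m') := by rw [← pow_add, Nat.add_sub_cancel' hle]; exact hj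
      exact Nat.div_lt_of_lt_mul (by rw [Nat.mul_comm] at this; exact this)
    have := level_eq_of_subset hj' hv (hsub.trans h2)
    rw [← this] at h2
    exact hne (le_antisymm hsub h2)
  have hm1 : m + 1 ≤ m' := hmm
  have hanc : j' / 2^(m'-m) = j := ancestor_index_eq hmm.le hj hj' hsub
  have hdd : (j' / 2^(m'-(m+1))) / 2 = j := by
    rw [Nat.div_div_eq_div_mul, ← pow_succ]
    have : m' - (m+1) + 1 = m' - m := by omega
    rw [this]; exact hanc
  refine ⟨hm1, hdd, by omega, arc_subset_ancestor' hm1⟩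

end DA

namespace DA
open Set

lemma continuous_coe : Continuous (fun r : ℝ => (r : AddCircle (1:ℝ))) := continuous_quot_mk

lemma interior_subset_image_Ioo {m j : ℕ} (hm : 1 ≤ m) (hj : j < 2^m) :
    interior (dyadicArc m j) ⊆
      (fun r : ℝ => (r : AddCircle (1:ℝ))) '' Set.Ioo ((j:ℝ)/2^m) (((j:ℝ)+1)/2^m) := by
  set a := (j:ℝ)/2^m with ha
  set b := ((j:ℝ)+1)/2^m with hb
  have h0a : (0:ℝ) ≤ a := ep_nonneg m j
  have hb1 : b ≤ 1 := ep_le_one hj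
  have hab : a < b := ep_lt m j
  have h2m : (2:ℝ) ≤ 2^m := by
    calc (2:ℝ) = 2^1 := by norm_num
    _ ≤ 2^m := by apply pow_le_pow_right₀ (by norm_num) hm
  have hlen : b - a ≤ 1/2 := by
    have : b - a = 1/2^m := by rw [ha, hb]; ring
    rw [this, div_le_div_iff₀ (by positivity) (by norm_num)]
    linarith
  intro z hz
  obtain ⟨t, ht, rfl⟩ := interior_subset hz
  rcases lt_or_eq_of_le ht.1 with h1 | h1
  · rcases lt_or_eq_of_le ht.2 with h2 | h2
    · exact ⟨t, ⟨h1, h2⟩, rfl⟩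
    · -- t = b : right endpoint, contradiction
      exfalso
      have hopen : IsOpen ((fun r : ℝ => (r : AddCircle (1:ℝ))) ⁻¹' interior (dyadicArc m j)) :=
        isOpen_interior.preimage continuous_coe
      have htm : t ∈ (fun r : ℝ => (r : AddCircle (1:ℝ))) ⁻¹' interior (dyadicArc m j) := hz
      obtain ⟨ε, hε, hball⟩ := Metric.isOpen_iff.1 hopen t htm
      set δ := min (ε/2) ((1-(b-a))/2) with hδ
      have hδ0 : 0 < δ := by
        apply lt_min (by linarith) (by linarith)
      have hδε : δ < ε := by
        have : δ ≤ ε/2 := min_le_left _ _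
        linarith
      have hδ1 : (b-a) + δ < 1 := by
        have : δ ≤ (1-(b-a))/2 := min_le_right _ _
        linarith
      have hmem : t + δ ∈ (fun r : ℝ => (r : AddCircle (1:ℝ))) ⁻¹' interior (dyadicArc m j) := by
        apply hball
        rw [Metric.mem_ball, Real.dist_eq]
        rw [abs_of_pos (by linarith : (0:ℝ) < t + δ - t)] <;> simp [hδε]
      have : ((t + δ : ℝ) : AddCircle (1:ℝ)) ∈ dyadicArc m j := interior_subset hmem
      obtain ⟨s, hs, hst⟩ := this
      obtain ⟨k, hk⟩ := coe_eq_coe.1 hst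
      -- hk : (t+δ) - s = k, s ∈ [a,b], t = b
      have hk1 : (k:ℝ) > 0 := by
        rw [← hk, h2]
        have := hs.2
        simp only [Set.mem_Icc] at hs
        linarith [hs.2]
      have hk2 : (k:ℝ) < 1 := by
        rw [← hk, h2]
        simp only [Set.mem_Icc] at hs
        linarith [hs.1]
      have : (0:ℤ) < k := by exact_mod_cast hk1
      have : k < 1 := by exact_mod_cast hk2
      omega
  · -- t = a : left endpoint, contradiction
    exfalso
    have hopen : IsOpen ((fun r : ℝ => (r : AddCircle (1:ℝ))) ⁻¹' interior (dyadicArc m j)) :=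
      isOpen_interior.preimage continuous_coe
    have htm : t ∈ (fun r : ℝ => (r : AddCircle (1:ℝ))) ⁻¹' interior (dyadicArc m j) := hz
    obtain ⟨ε, hε, hball⟩ := Metric.isOpen_iff.1 hopen t htm
    set δ := min (ε/2) ((1-(b-a))/2) with hδ
    have hδ0 : 0 < δ := by
      apply lt_min (by linarith) (by linarith)
    have hδε : δ < ε := by
      have : δ ≤ ε/2 := min_le_left _ _
      linarith
    have hδ1 : (b-a) + δ < 1 := by
      have : δ ≤ (1-(b-a))/2 := min_le_right _ _
      linarith
    have hmem : t - δ ∈ (fun r : ℝ => (r : AddCircle (1:ℝ))) ⁻¹' interior (dyadicArc m j) := by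
      apply hball
      rw [Metric.mem_ball, Real.dist_eq]
      rw [abs_of_neg (by linarith : t - δ - t < 0)]
      simp [hδε]
    have : ((t - δ : ℝ) : AddCircle (1:ℝ)) ∈ dyadicArc m j := interior_subset hmem
    obtain ⟨s, hs, hst⟩ := this
    obtain ⟨k, hk⟩ := coe_eq_coe.1 hst
    have hk1 : (k:ℝ) < 0 := by
      rw [← hk, ← h1]
      simp only [Set.mem_Icc] at hs
      linarith [hs.1]
    have hk2 : (k:ℝ) > -1 := by
      rw [← hk, ← h1]
      simp only [Set.mem_Icc] at hs
      linarith [hs.2]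
    have : k < 0 := by exact_mod_cast hk1
    have : (-1:ℤ) < k := by exact_mod_cast hk2
    omega

end DA

namespace DA
open Set

lemma nested_or_disjoint {m j m' j' : ℕ} (hj : j < 2^m) (hj' : j' < 2^m') :
    dyadicArc m j ⊆ dyadicArc m' j' ∨ dyadicArc m' j' ⊆ dyadicArc m j ∨
      interior (dyadicArc m j) ∩ interior (dyadicArc m' j') = ∅ := by
  suffices H : ∀ m m' j j' : ℕ, j < 2^m → j' < 2^m' → m ≤ m' →
      dyadicArc m' j' ⊆ dyadicArc m j ∨
      interior (dyadicArc m j) ∩ interior (dyadicArc m' j') = ∅ by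
    rcases le_total m m' with hmm | hmm
    · rcases H m m' j j' hj hj' hmm with h | h
      · exact Or.inr (Or.inl h)
      · exact Or.inr (Or.inr h)
    · rcases H m' m j' j hj' hj hmm with h | h
      · exact Or.inl h
      · exact Or.inr (Or.inr (by rw [Set.inter_comm]; exact h))
  clear hj hj' m m' j j'
  intro m m' j j' hj hj' hmm
  rcases Nat.eq_zero_or_pos m with hm0 | hm0
  · subst hm0
    left
    interval_cases j
    rw [arc_zero]
    exact Set.subset_univ _
  have hm'0 : 1 ≤ m' := le_trans hm0 hmm
  set j2 := j' / 2^(m'-m) with hj2def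
  have hj2 : j2 < 2^m := by
    have : j' < 2^m * 2^(m'-m) := by rw [← pow_add, Nat.add_sub_cancel' hmm]; exact hj'
    exact Nat.div_lt_of_lt_mul (by rw [Nat.mul_comm] at this; exact this)
  by_cases hcase : j2 = j
  · left
    have := arc_subset_ancestor' (j' := j') hmm
    rw [← hj2def, hcase] at this
    exact this
  · right
    -- interiors disjoint
    apply Set.eq_empty_iff_forall_notMem.2
    rintro z ⟨hz1, hz2⟩
    obtain ⟨t, ht, rfl⟩ := interior_subset_image_Ioo hm0 hj hz1
    obtain ⟨s, hs, hst⟩ := interior_subset_image_Ioo hm'0 hj' hz2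
    -- t = s
    have h0a : (0:ℝ) ≤ (j:ℝ)/2^m := ep_nonneg m j
    have hb1 : ((j:ℝ)+1)/2^m ≤ 1 := ep_le_one hj
    have h0a' : (0:ℝ) ≤ (j':ℝ)/2^m' := ep_nonneg m' j'
    have hb1' : ((j':ℝ)+1)/2^m' ≤ 1 := ep_le_one hj'
    obtain ⟨k, hk⟩ := coe_eq_coe.1 hst
    have hk1 : (k:ℝ) < 1 := by rw [← hk]; cases ht; cases hs; linarith
    have hk2 : (-1:ℝ) < k := by rw [← hk]; cases ht; cases hs; linarith
    have hk0 : k = 0 := by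
      have : k < 1 := by exact_mod_cast hk1
      have : (-1:ℤ) < k := by exact_mod_cast hk2
      omega
    rw [hk0] at hk
    push_cast at hk
    have hts : t = s := by linarith
    subst hts
    -- now t ∈ Ioo(level m, j) and t ∈ Ioo(ancestor j2)
    obtain ⟨hr1, hr2⟩ := anc_real (q := m'-m) (j := j2) (j' := j') rfl m
    rw [Nat.add_sub_cancel' hmm] at hr1 hr2
    have ht2 : (j2:ℝ)/2^m < t ∧ t < ((j2:ℝ)+1)/2^m :=
      ⟨lt_of_le_of_lt hr1 hs.1, lt_of_lt_of_le hs.2 hr2⟩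
    rcases Nat.lt_or_ge j j2 with h | h
    · have hle : ((j:ℝ)+1)/2^m ≤ (j2:ℝ)/2^m := by
        gcongr; exact_mod_cast Nat.succ_le_of_lt h
      linarith [ht.2, ht2.1]
    · have h' : j2 < j := lt_of_le_of_ne h hcase
      have hle : ((j2:ℝ)+1)/2^m ≤ (j:ℝ)/2^m := by
        gcongr; exact_mod_cast Nat.succ_le_of_lt h'
      linarith [ht.1, ht2.2]

end DA

namespace DA
open Set Finset

lemma arc_isClosed (m j : ℕ) : IsClosed (dyadicArc m j) :=
  (isCompact_Icc.image continuous_coe).isClosed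

lemma arc_nonempty (m j : ℕ) : (dyadicArc m j).Nonempty :=
  ⟨((j:ℝ)/2^m : ℝ), ⟨(j:ℝ)/2^m, ⟨le_refl _, (ep_lt m j).le⟩, rfl⟩⟩

lemma arc_subset_closure_image_Ioo (m j : ℕ) :
    dyadicArc m j ⊆ closure ((fun r : ℝ => (r : AddCircle (1:ℝ))) ''
      Set.Ioo ((j:ℝ)/2^m) (((j:ℝ)+1)/2^m)) := by
  have h : Set.Icc ((j:ℝ)/2^m) (((j:ℝ)+1)/2^m) =
      closure (Set.Ioo ((j:ℝ)/2^m) (((j:ℝ)+1)/2^m)) := (closure_Ioo (ep_lt m j).ne).symm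
  calc dyadicArc m j = (fun r : ℝ => (r : AddCircle (1:ℝ))) ''
        closure (Set.Ioo ((j:ℝ)/2^m) (((j:ℝ)+1)/2^m)) := by rw [dyadicArc, h]
  _ ⊆ _ := image_closure_subset_closure_image continuous_coe

/-- The covering lemma: any finite family of dyadic arcs whose union is `dyadicArc m j`
has `w`-sum at least `w m j`. -/
lemma cover_sum {ι : Type*} (w : ℕ → ℕ → ℝ)
    (hpos : ∀ m j, j < 2^m → 0 < w m j)
    (hchild : ∀ m j, j < 2^m → w m j ≤ w (m+1) (2*j) + w (m+1) (2*j+1)) :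
    ∀ (d m j : ℕ) (T : Finset ι) (f : ι → ℕ × ℕ), j < 2^m →
    (∀ k ∈ T, (f k).2 < 2^(f k).1) → (∀ k ∈ T, (f k).1 ≤ m + d) →
    (⋃ k ∈ T, dyadicArc (f k).1 (f k).2) = dyadicArc m j →
    w m j ≤ ∑ k ∈ T, w (f k).1 (f k).2 := by
  classical
  intro d
  induction d with
  | zero =>
    intro m j T f hj hval hlev hU
    -- every arc is contained in arc(m,j); with level ≤ m this forces equality for some k
    have hTne : T.Nonempty := by
      by_contra hT
      rw [Finset.not_nonempty_iff_eq_empty] at hT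
      rw [hT] at hU
      simp at hU
      exact (arc_nonempty m j).ne_empty hU.symm
    obtain ⟨k, hk⟩ := hTne
    have hsub : dyadicArc (f k).1 (f k).2 ⊆ dyadicArc m j := by
      rw [← hU]; intro z hz; rw [Set.mem_iUnion₂]; exact ⟨k, hk, hz⟩
    have heq : dyadicArc (f k).1 (f k).2 = dyadicArc m j := by
      by_contra hne
      have := proper_subset_child hj (hval k hk) hsub hne
      have := this.1
      have := hlev k hk
      omega
    obtain ⟨h1, h2⟩ := arc_inj (hval k hk) hj heq
    calc w m j = w (f k).1 (f k).2 := by rw [h1, h2]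
    _ ≤ ∑ k ∈ T, w (f k).1 (f k).2 :=
      Finset.single_le_sum (fun i hi => (hpos _ _ (hval i hi)).le) hk
  | succ d ih =>
    intro m j T f hj hval hlev hU
    by_cases hex : ∃ k ∈ T, dyadicArc (f k).1 (f k).2 = dyadicArc m j
    · obtain ⟨k, hk, heq⟩ := hex
      obtain ⟨h1, h2⟩ := arc_inj (hval k hk) hj heq
      calc w m j = w (f k).1 (f k).2 := by rw [h1, h2]
      _ ≤ ∑ k ∈ T, w (f k).1 (f k).2 :=
        Finset.single_le_sum (fun i hi => (hpos _ _ (hval i hi)).le) hk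
    · push_neg at hex
      -- every arc is a proper subarc, hence contained in a child
      have hprop : ∀ k ∈ T, m + 1 ≤ (f k).1 ∧
          ((f k).2 / 2^((f k).1-(m+1))) / 2 = j ∧ (f k).2 / 2^((f k).1-(m+1)) < 2^(m+1) ∧
          dyadicArc (f k).1 (f k).2 ⊆ dyadicArc (m+1) ((f k).2 / 2^((f k).1-(m+1))) := by
        intro k hk
        have hsub : dyadicArc (f k).1 (f k).2 ⊆ dyadicArc m j := by
          rw [← hU]; intro z hz; rw [Set.mem_iUnion₂]; exact ⟨k, hk, hz⟩
        exact proper_subset_child hj (hval k hk) hsub (hex k hk)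
      have hi01 : ∀ k ∈ T, (f k).2 / 2^((f k).1-(m+1)) = 2*j ∨
          (f k).2 / 2^((f k).1-(m+1)) = 2*j+1 := by
        intro k hk
        have := (hprop k hk).2.1
        omega
      set T0 := T.filter (fun k => (f k).2 / 2^((f k).1-(m+1)) = 2*j) with hT0
      set T1 := T.filter (fun k => ¬ ((f k).2 / 2^((f k).1-(m+1)) = 2*j)) with hT1
      have hj1 : 2*j < 2^(m+1) := by rw [pow_succ]; omega
      have hj2 : 2*j+1 < 2^(m+1) := by rw [pow_succ]; omega
      -- the unions over T0 and T1 are the two children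
      have hUsub : ∀ b : ℕ, b = 2*j ∨ b = 2*j+1 →
          ∀ (S : Finset ι), (∀ k ∈ S, k ∈ T ∧ (f k).2 / 2^((f k).1-(m+1)) = b) →
          (⋃ k ∈ S, dyadicArc (f k).1 (f k).2) ⊆ dyadicArc (m+1) b := by
        intro b hb S hS
        apply Set.iUnion₂_subset
        intro k hk
        have h := (hprop k (hS k hk).1).2.2.2
        rw [(hS k hk).2] at h
        exact h
      -- key separation: a point of the open half belongs only to arcs indexed in that half
      have hsep : ∀ (b b' : ℕ), b < 2^(m+1) → b' < 2^(m+1) → b ≠ b' →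
          ∀ t : ℝ, t ∈ Set.Ioo ((b:ℝ)/2^(m+1)) (((b:ℝ)+1)/2^(m+1)) →
          ((t:ℝ) : AddCircle (1:ℝ)) ∉ dyadicArc (m+1) b' := by
        intro b b' hbv hb'v hbb t ht hmem
        have h0 : (0:ℝ) ≤ (b:ℝ)/2^(m+1) := ep_nonneg (m+1) b
        have h1 : ((b:ℝ)+1)/2^(m+1) ≤ 1 := ep_le_one hbv
        have ht0 : 0 < t := lt_of_le_of_lt h0 ht.1
        have ht1 : t < 1 := lt_of_lt_of_le ht.2 h1
        have := (mem_arc_iff hb'v ht0 ht1).1 hmem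
        rw [Set.mem_Icc] at this
        rcases Nat.lt_or_ge b b' with h | h
        · have hle : ((b:ℝ)+1)/2^(m+1) ≤ (b':ℝ)/2^(m+1) := by
            gcongr; exact_mod_cast Nat.succ_le_of_lt h
          linarith [ht.2, this.1]
        · have h' : b' < b := lt_of_le_of_ne h (Ne.symm hbb)
          have hle : ((b':ℝ)+1)/2^(m+1) ≤ (b:ℝ)/2^(m+1) := by
            gcongr; exact_mod_cast Nat.succ_le_of_lt h'
          linarith [ht.1, this.2]
      have hUeq : ∀ b : ℕ, b = 2*j ∨ b = 2*j+1 →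
          ∀ (S : Finset ι), (∀ k ∈ T, ((f k).2 / 2^((f k).1-(m+1)) = b ↔ k ∈ S)) → (∀ k ∈ S, k ∈ T) →
          (⋃ k ∈ S, dyadicArc (f k).1 (f k).2) = dyadicArc (m+1) b := by
        intro b hb S hSiff hST
        have hbv : b < 2^(m+1) := by rcases hb with rfl | rfl; exacts [hj1, hj2]
        apply le_antisymm
        · exact hUsub b hb S (fun k hk => ⟨hST k hk, ((hSiff k (hST k hk)).2 hk)⟩)
        · -- child ⊆ union over S
          have hIoo : (fun r : ℝ => (r : AddCircle (1:ℝ))) ''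
              Set.Ioo ((b:ℝ)/2^(m+1)) (((b:ℝ)+1)/2^(m+1)) ⊆
              ⋃ k ∈ S, dyadicArc (f k).1 (f k).2 := by
            rintro z ⟨t, ht, rfl⟩
            have hzarc : ((t:ℝ) : AddCircle (1:ℝ)) ∈ dyadicArc m j := by
              have : ((t:ℝ) : AddCircle (1:ℝ)) ∈ dyadicArc (m+1) b :=
                mem_arc_of_mem_Icc ⟨ht.1.le, ht.2.le⟩
              have hsplit := arc_split m j
              rw [hsplit]
              rcases hb with rfl | rfl
              · exact Or.inl this
              · exact Or.inr this
            rw [← hU] at hzarc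
            rw [Set.mem_iUnion₂] at hzarc
            obtain ⟨k, hk, hzk⟩ := hzarc
            rw [Set.mem_iUnion₂]
            refine ⟨k, ?_, hzk⟩
            rw [← hSiff k hk]
            -- if i k were the other child, separation gives a contradiction
            rcases hi01 k hk with h | h
            · rcases hb with rfl | rfl
              · exact h
              · exfalso
                have hzk' : ((t:ℝ) : AddCircle (1:ℝ)) ∈
                    dyadicArc (m+1) ((f k).2 / 2^((f k).1-(m+1))) := by
                  have := (hprop k hk).2.2.2
                  exact this hzk
                rw [h] at hzk'
                exact hsep (2*j+1) (2*j) hj2 hj1 (by omega) t ht hzk'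
            · rcases hb with rfl | rfl
              · exfalso
                have hzk' : ((t:ℝ) : AddCircle (1:ℝ)) ∈
                    dyadicArc (m+1) ((f k).2 / 2^((f k).1-(m+1))) := by
                  have := (hprop k hk).2.2.2
                  exact this hzk
                rw [h] at hzk'
                exact hsep (2*j) (2*j+1) hj1 hj2 (by omega) t ht hzk'
              · exact h
          have hclosed : IsClosed (⋃ k ∈ S, dyadicArc (f k).1 (f k).2) :=
            Set.Finite.isClosed_biUnion S.finite_toSet (fun k _ => arc_isClosed _ _)
          calc dyadicArc (m+1) b ⊆ closure ((fun r : ℝ => (r : AddCircle (1:ℝ))) ''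
                Set.Ioo ((b:ℝ)/2^(m+1)) (((b:ℝ)+1)/2^(m+1))) :=
            arc_subset_closure_image_Ioo (m+1) b
          _ ⊆ closure (⋃ k ∈ S, dyadicArc (f k).1 (f k).2) := closure_mono hIoo
          _ = ⋃ k ∈ S, dyadicArc (f k).1 (f k).2 := hclosed.closure_eq
      have hU0 : (⋃ k ∈ T0, dyadicArc (f k).1 (f k).2) = dyadicArc (m+1) (2*j) := by
        apply hUeq (2*j) (Or.inl rfl) T0
        · intro k hk
          simp [hT0, Finset.mem_filter, hk]
        · intro k hk
          exact (Finset.mem_filter.1 hk).1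
      have hU1 : (⋃ k ∈ T1, dyadicArc (f k).1 (f k).2) = dyadicArc (m+1) (2*j+1) := by
        apply hUeq (2*j+1) (Or.inr rfl) T1
        · intro k hk
          have := hi01 k hk
          simp only [hT1, Finset.mem_filter, hk, true_and]
          omega
        · intro k hk
          exact (Finset.mem_filter.1 hk).1
      have hle0 : w (m+1) (2*j) ≤ ∑ k ∈ T0, w (f k).1 (f k).2 := by
        apply ih (m+1) (2*j) T0 f hj1
        · intro k hk; exact hval k (Finset.mem_filter.1 hk).1
        · intro k hk
          have := hlev k (Finset.mem_filter.1 hk).1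
          omega
        · exact hU0
      have hle1 : w (m+1) (2*j+1) ≤ ∑ k ∈ T1, w (f k).1 (f k).2 := by
        apply ih (m+1) (2*j+1) T1 f hj2
        · intro k hk; exact hval k (Finset.mem_filter.1 hk).1
        · intro k hk
          have := hlev k (Finset.mem_filter.1 hk).1
          omega
        · exact hU1
      have hsum : ∑ k ∈ T0, w (f k).1 (f k).2 + ∑ k ∈ T1, w (f k).1 (f k).2
          = ∑ k ∈ T, w (f k).1 (f k).2 :=
        Finset.sum_filter_add_sum_filter_not T _ _
      have := hchild m j hj
      linarith

end DA

namespace DA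
open Set Finset

lemma S1_pos {Δ : ℕ → ℕ → ℝ} (h : IsS1 Δ) : ∀ m j, j < 2^m → 0 < Δ m j := h.2.1

lemma S1_child {Δ : ℕ → ℕ → ℝ} (h : IsS1 Δ) :
    ∀ m j, j < 2^m → Δ m j ≤ Δ (m+1) (2*j) + Δ (m+1) (2*j+1) := by
  intro m j hj
  obtain ⟨heq, hval⟩ := h.2.2.1 m j hj
  have hpos := S1_pos h m j hj
  rcases hval with hv | hv <;> rw [← heq, hv] <;> linarith

lemma trunc_pos {Δ : ℕ → ℕ → ℝ} (h : IsS1 Δ) (n : ℕ) :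
    ∀ m j, j < 2^m → 0 < trunc Δ n m j := by
  intro m j hj
  unfold trunc
  split_ifs with hmn
  · exact S1_pos h m j hj
  · push_neg at hmn
    apply div_pos _ (two_pow_pos (m-n))
    apply S1_pos h
    rw [Nat.div_lt_iff_lt_mul (Nat.two_pow_pos _), ← pow_add]
    rwa [Nat.add_sub_cancel' hmn.le]

lemma trunc_child {Δ : ℕ → ℕ → ℝ} (h : IsS1 Δ) (n : ℕ) :
    ∀ m j, j < 2^m → trunc Δ n m j ≤ trunc Δ n (m+1) (2*j) + trunc Δ n (m+1) (2*j+1) := by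
  intro m j hj
  unfold trunc
  rcases Nat.lt_or_ge n (m+1) with hn | hn
  · rcases Nat.lt_or_ge m n with hm | hm
    · omega
    rcases eq_or_lt_of_le hm with hm | hm
    · -- m = n
      rw [if_pos (by omega), if_neg (by omega), if_neg (by omega)]
      have e1 : m + 1 - n = 1 := by omega
      rw [e1, pow_one, pow_one]
      rw [Nat.mul_div_cancel_left j (by norm_num : 0 < 2)]
      have h2 : (2*j+1)/2 = j := by omega
      rw [h2, ← hm]
      linarith [S1_pos h n j (by rw [hm]; exact hj)]
    · -- n < m
      rw [if_neg (by omega), if_neg (by omega), if_neg (by omega)]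
      have e1 : m + 1 - n = (m - n) + 1 := by omega
      have e2 : (2*j) / 2^((m-n)+1) = j / 2^(m-n) := by
        rw [pow_succ']
        rw [Nat.mul_div_mul_left _ _ (by norm_num : 0 < 2)]
      have e3 : (2*j+1) / 2^((m-n)+1) = j / 2^(m-n) := by
        rw [pow_succ', ← Nat.div_div_eq_div_mul]
        have : (2*j+1)/2 = j := by omega
        rw [this]
      rw [e1, e2, e3]
      have e4 : (2:ℝ)^((m-n)+1) = 2^(m-n) * 2 := by rw [pow_succ]
      rw [e4]
      have hp := two_pow_pos (m-n)
      have hpos : 0 < Δ n (j / 2^(m-n)) := by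
        apply S1_pos h
        rw [Nat.div_lt_iff_lt_mul (Nat.two_pow_pos _), ← pow_add]
        rwa [Nat.add_sub_cancel' (by omega : n ≤ m)]
      rw [div_mul_eq_div_div]
      linarith
  · -- m+1 ≤ n
    rw [if_pos (by omega), if_pos hn, if_pos hn]
    exact S1_child h m j hj

lemma iUnion_split_compl {α : Type*} {n : ℕ} (A : Fin n → Set α) (T : Finset (Fin n)) :
    (⋃ k, A k) = (⋃ k ∈ T, A k) ∪ (⋃ k ∈ Tᶜ, A k) := by
  ext z
  simp only [Set.mem_iUnion, Set.mem_union, Finset.mem_compl]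
  constructor
  · rintro ⟨k, hk⟩
    by_cases h : k ∈ T
    · exact Or.inl ⟨k, h, hk⟩
    · exact Or.inr ⟨k, h, hk⟩
  · rintro (⟨k, _, hk⟩ | ⟨k, _, hk⟩) <;> exact ⟨k, hk⟩

lemma iUnion_succAbove {α : Type*} {n : ℕ} (A : Fin (n+1) → Set α) (p : Fin (n+1))
    (hsub : ∃ q, q ≠ p ∧ A p ⊆ A q) :
    (⋃ i : Fin n, A (p.succAbove i)) = ⋃ k, A k := by
  apply le_antisymm
  · exact Set.iUnion_subset (fun i => Set.subset_iUnion A _)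
  · apply Set.iUnion_subset
    intro k
    by_cases hk : k = p
    · obtain ⟨q, hq, hsubq⟩ := hsub
      obtain ⟨i, hi⟩ := Fin.exists_succAbove_eq hq
      subst hk
      refine hsubq.trans ?_
      rw [← hi]
      exact Set.subset_iUnion (fun i => A (k.succAbove i)) i
    · obtain ⟨i, hi⟩ := Fin.exists_succAbove_eq hk
      rw [← hi]
      exact Set.subset_iUnion (fun i => A (p.succAbove i)) i

end DA

namespace DA
open Set Finset

/-- Every chain sum dominates some minimal chain sum. -/
lemma reduce (w : ℕ → ℕ → ℝ)
    (hpos : ∀ m j, j < 2^m → 0 < w m j)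
    (hchild : ∀ m j, j < 2^m → w m j ≤ w (m+1) (2*j) + w (m+1) (2*j+1))
    (x y : AddCircle (1:ℝ)) :
    ∀ N (c : Fin (N+1) → ℕ × ℕ), IsDyadicChain N c x y →
    ∃ s ∈ minChainSums w x y, s ≤ ∑ k, w (c k).1 (c k).2 := by
  classical
  intro N
  induction N using Nat.strong_induction_on with
  | _ N IH =>
    intro c hc
    obtain ⟨hval, hconn, hx, hy⟩ := hc
    by_cases hmin : IsMinimalChain N c
    · exact ⟨∑ k, w (c k).1 (c k).2, ⟨N, c, ⟨hval, hconn, hx, hy⟩, hmin, rfl⟩, le_refl _⟩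
    rw [IsMinimalChain, not_and_or] at hmin
    rcases hmin with hA | hB
    · -- two arcs with intersecting interiors: one is contained in the other
      push_neg at hA
      obtain ⟨k, l, hkl, hint⟩ := hA
      have := nested_or_disjoint (hval k) (hval l)
      have hnested : (∃ a b : Fin (N+1), a ≠ b ∧
          dyadicArc (c a).1 (c a).2 ⊆ dyadicArc (c b).1 (c b).2) := by
        rcases this with h | h | h
        · exact ⟨k, l, hkl, h⟩
        · exact ⟨l, k, hkl.symm, h⟩
        · exact absurd h hint.ne_empty
      obtain ⟨a, b, hab, hsub⟩ := hnested
      cases N with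
      | zero =>
        refine absurd (Fin.ext ?_) hab
        have h1 := a.isLt; have h2 := b.isLt; omega
      | succ N' =>
        set c' : Fin (N'+1) → ℕ × ℕ := fun i => c (a.succAbove i) with hc'
        have hUeq : (⋃ i, dyadicArc (c' i).1 (c' i).2) = ⋃ k, dyadicArc (c k).1 (c k).2 :=
          iUnion_succAbove (fun k => dyadicArc (c k).1 (c k).2) a ⟨b, hab.symm, hsub⟩
        have hchain' : IsDyadicChain N' c' x y := by
          refine ⟨fun i => hval _, ?_, ?_, ?_⟩ <;> rw [hUeq]
          exacts [hconn, hx, hy]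
        obtain ⟨s, hs, hle⟩ := IH N' (by omega) c' hchain'
        refine ⟨s, hs, hle.trans ?_⟩
        have hsum := Fin.sum_univ_succAbove (fun k => w (c k).1 (c k).2) a
        rw [hsum]
        have := hpos _ _ (hval a)
        simp only [hc']
        linarith
    · -- a subfamily unions to a dyadic arc: replace it by that arc
      push_neg at hB
      obtain ⟨T, hT2, m, j, hj, hTU⟩ := hB
      have hN1 : 2 ≤ N + 1 := le_trans hT2 (by simpa using T.card_le_univ)
      set R := Tᶜ with hR
      set K := R.card with hK
      have hcardsum : T.card + K = N + 1 := by
        rw [hK, hR]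
        simpa using T.card_add_card_compl
      have hKN : K < N := by omega
      set e := R.orderIsoOfFin (rfl : R.card = K) with he
      set c' : Fin (K+1) → ℕ × ℕ := Fin.cons (m, j) (fun i => c (e i)) with hc'
      -- union equality
      have hUR : (⋃ i : Fin K, dyadicArc (c (e i)).1 (c (e i)).2)
          = ⋃ k ∈ R, dyadicArc (c k).1 (c k).2 := by
        apply le_antisymm
        · apply Set.iUnion_subset
          intro i
          intro z hz
          rw [Set.mem_iUnion₂]
          exact ⟨e i, (e i).2, hz⟩
        · apply Set.iUnion₂_subset
          intro k hk
          have : k = (e (e.symm ⟨k, hk⟩) : Fin (N+1)) := by simp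
          rw [this]
          exact Set.subset_iUnion (fun i => dyadicArc (c (e i)).1 (c (e i)).2) (e.symm ⟨k, hk⟩)
      have hUeq : (⋃ i, dyadicArc (c' i).1 (c' i).2) = ⋃ k, dyadicArc (c k).1 (c k).2 := by
        have hsplit : (⋃ i, dyadicArc (c' i).1 (c' i).2) =
            dyadicArc m j ∪ ⋃ i : Fin K, dyadicArc (c (e i)).1 (c (e i)).2 := by
          apply le_antisymm
          · apply Set.iUnion_subset
            intro i
            induction i using Fin.cases with
            | zero => simp only [hc', Fin.cons_zero]; exact Set.subset_union_left
            | succ i =>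
              simp only [hc', Fin.cons_succ]
              exact Set.subset_union_of_subset_right
                (Set.subset_iUnion (fun i => dyadicArc (c (e i)).1 (c (e i)).2) i) _
          · apply Set.union_subset
            · have : dyadicArc m j = dyadicArc (c' 0).1 (c' 0).2 := by
                simp [hc']
              rw [this]
              exact Set.subset_iUnion (fun i => dyadicArc (c' i).1 (c' i).2) 0
            · apply Set.iUnion_subset
              intro i
              have : dyadicArc (c (e i)).1 (c (e i)).2
                  = dyadicArc (c' i.succ).1 (c' i.succ).2 := by simp [hc']
              rw [this]
              exact Set.subset_iUnion (fun i => dyadicArc (c' i).1 (c' i).2) i.succ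
        rw [hsplit, hUR, ← hTU, iUnion_split_compl (fun k => dyadicArc (c k).1 (c k).2) T]
      have hchain' : IsDyadicChain K c' x y := by
        refine ⟨?_, ?_, ?_, ?_⟩
        · intro i
          induction i using Fin.cases with
          | zero => simpa [hc'] using hj
          | succ i => simp only [hc', Fin.cons_succ]; exact hval _
        · rw [hUeq]; exact hconn
        · rw [hUeq]; exact hx
        · rw [hUeq]; exact hy
      obtain ⟨s, hs, hle⟩ := IH K hKN c' hchain'
      refine ⟨s, hs, hle.trans ?_⟩
      -- sum comparison
      have hsum1 : ∑ i, w (c' i).1 (c' i).2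
          = w m j + ∑ i : Fin K, w (c (e i)).1 (c (e i)).2 := by
        rw [Fin.sum_univ_succ]
        simp [hc']
      have hsum2 : ∑ i : Fin K, w (c (e i)).1 (c (e i)).2
          = ∑ k ∈ R, w (c k).1 (c k).2 := by
        rw [← Finset.sum_coe_sort R (fun k => w (c k).1 (c k).2)]
        exact Equiv.sum_comp e.toEquiv (fun k : R => w (c (k:Fin (N+1))).1 (c (k:Fin (N+1))).2)
      have hcover : w m j ≤ ∑ k ∈ T, w (c k).1 (c k).2 := by
        apply cover_sum w hpos hchild (Finset.sup T (fun k => (c k).1)) m j T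
          (fun k => c k) hj
        · intro k hk; exact hval k
        · intro k hk
          have : (c k).1 ≤ Finset.sup T (fun k => (c k).1) :=
            Finset.le_sup (f := fun k => (c k).1) hk
          omega
        · exact hTU
      have hsplitsum : ∑ k ∈ T, w (c k).1 (c k).2 + ∑ k ∈ R, w (c k).1 (c k).2
          = ∑ k, w (c k).1 (c k).2 := by
        rw [hR]
        exact Finset.sum_add_sum_compl T _
      rw [hsum1, hsum2]
      linarith

end DA

namespace DA
open Set Finset

lemma trivial_chain_mem (w : ℕ → ℕ → ℝ) (x y : AddCircle (1:ℝ)) :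
    w 0 0 ∈ minChainSums w x y := by
  refine ⟨0, fun _ => (0, 0), ⟨?_, ?_, ?_, ?_⟩, ⟨?_, ?_⟩, ?_⟩
  · intro k; norm_num
  · rw [Set.iUnion_const]
    apply IsConnected.image (isConnected_Icc (by norm_num : (((0:ℕ):ℝ)/2^0) ≤ (((0:ℕ):ℝ)+1)/2^0))
    exact continuous_coe.continuousOn
  · rw [Set.iUnion_const, arc_zero]; trivial
  · rw [Set.iUnion_const, arc_zero]; trivial
  · intro k l hkl
    exact absurd (Fin.ext (by have := k.isLt; have := l.isLt; omega)) hkl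
  · intro T hT
    exfalso
    have := T.card_le_univ
    simp at this
    omega
  · simp

lemma sum_nonneg_of_chain {w : ℕ → ℕ → ℝ} (hpos : ∀ m j, j < 2^m → 0 < w m j)
    {N : ℕ} {c : Fin (N+1) → ℕ × ℕ} (hval : ∀ k, (c k).2 < 2 ^ (c k).1) :
    0 ≤ ∑ k, w (c k).1 (c k).2 :=
  Finset.sum_nonneg (fun k _ => (hpos _ _ (hval k)).le)

lemma sInf_eq (w : ℕ → ℕ → ℝ)
    (hpos : ∀ m j, j < 2^m → 0 < w m j)
    (hchild : ∀ m j, j < 2^m → w m j ≤ w (m+1) (2*j) + w (m+1) (2*j+1))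
    (x y : AddCircle (1:ℝ)) :
    sInf (chainSums w x y) = sInf (minChainSums w x y) := by
  have hmono : minChainSums w x y ⊆ chainSums w x y := by
    rintro s ⟨N, c, hc, _, rfl⟩
    exact ⟨N, c, hc, rfl⟩
  have hbdd : BddBelow (chainSums w x y) := by
    refine ⟨0, ?_⟩
    rintro s ⟨N, c, hc, rfl⟩
    exact sum_nonneg_of_chain hpos hc.1
  have hbddmin : BddBelow (minChainSums w x y) := hbdd.mono hmono
  have hnemin : (minChainSums w x y).Nonempty := ⟨w 0 0, trivial_chain_mem w x y⟩
  apply le_antisymm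
  · exact csInf_le_csInf hbdd hnemin hmono
  · apply le_csInf (hnemin.mono hmono)
    rintro s ⟨N, c, hc, rfl⟩
    obtain ⟨t, ht, hle⟩ := reduce w hpos hchild x y N c hc
    exact (csInf_le hbddmin ht).trans hle

end DA

/-- The infima defining `d_Δ(x,y)` and `d_n(x,y)` are unchanged by the assumption that the
chains of dyadic arcs used in these definitions are minimal. -/
theorem dOf_eq_inf_over_minimal_chains (Δ : ℕ → ℕ → ℝ) (hΔ : IsS1 Δ)
    (x y : AddCircle (1 : ℝ)) :
    dOf Δ x y = sInf (minChainSums Δ x y) ∧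
    ∀ n : ℕ, dOf (trunc Δ n) x y = sInf (minChainSums (trunc Δ n) x y) := by
  constructor
  · exact DA.sInf_eq Δ (DA.S1_pos hΔ) (DA.S1_child hΔ) x y
  · intro n
    exact DA.sInf_eq (trunc Δ n) (DA.trunc_pos hΔ n) (DA.trunc_child hΔ n) x y
end
end

section
/- Let {I_i}_{i=1}^N be a minimal chain of dyadic arcs in 𝕊 indexed so that for 1 ≤ i ≤ N−1 the right endpoint of I_i is the left endpoint of I_{i+1}. Then there is either a unique interval or a unique pair of adjacent intervals from {I_i}_{i=1}^N of maximal length 2^{-l(I_i)}. If i* denotes the index of such a maximal interval, then: if i* > 1, the level l(I_i) is strictly decreasing for i = 1,…,i*−1; and if i* < N, the level l(I_i) is strictly increasing for i = i*+1,…,N. -/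
noncomputable section

lemma addCircle_coe_eq_iff (a b : ℝ) :
    (a : AddCircle (1:ℝ)) = b ↔ ∃ z : ℤ, a - b = z := by
  rw [show ((a : AddCircle (1:ℝ)) = b) ↔ _ from QuotientAddGroup.eq_iff_sub_mem]
  simp [AddSubgroup.mem_zmultiples_iff, eq_comm]

/-- exact level of a left endpoint -/
def nuL (n j : ℕ) : ℕ := if j = 0 then 0 else n - padicValNat 2 j
/-- exact level of a right endpoint -/
def nuR (n j : ℕ) : ℕ := if j + 1 = 2 ^ n then 0 else n - padicValNat 2 (j + 1)

lemma padicValNat_lt {n j : ℕ} (h0 : j ≠ 0) (h : j < 2 ^ n) : padicValNat 2 j < n := by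
  have hd : 2 ^ padicValNat 2 j ∣ j := pow_padicValNat_dvd
  have := Nat.le_of_dvd (Nat.pos_of_ne_zero h0) hd
  have := Nat.lt_of_le_of_lt this h
  exact (Nat.pow_lt_pow_iff_right one_lt_two).1 this

lemma nuL_le (n j : ℕ) : nuL n j ≤ n := by unfold nuL; split <;> omega
lemma nuR_le (n j : ℕ) : nuR n j ≤ n := by unfold nuR; split <;> omega

/-- exactly one endpoint has exact level n -/
lemma nu_split {n j : ℕ} (hn : 1 ≤ n) (hj : j < 2 ^ n) :
    (nuL n j = n ∧ nuR n j < n) ∨ (nuL n j < n ∧ nuR n j = n) := by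
  have h2 : 2 ≤ 2 ^ n := by calc 2 = 2^1 := rfl
                                 _ ≤ 2^n := Nat.pow_le_pow_right (by norm_num) hn
  rcases Nat.even_or_odd j with he | ho
  · right
    constructor
    · unfold nuL
      split
      · omega
      · rename_i h0
        have h1 : padicValNat 2 j ≥ 1 :=
          one_le_padicValNat_of_dvd h0 he.two_dvd
        have := padicValNat_lt h0 hj
        omega
    · unfold nuR
      have hne : j + 1 ≠ 2 ^ n := by
        intro h
        have hd : (2:ℕ) ∣ j + 1 := h ▸ dvd_pow_self 2 (by omega)
        rcases he with ⟨s, hs⟩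
        omega
      rw [if_neg hne]
      have : ¬ (2 ∣ (j+1)) := by
        rcases he with ⟨s, hs⟩; omega
      rw [padicValNat.eq_zero_of_not_dvd this]
      omega
  · left
    constructor
    · unfold nuL
      have h0 : j ≠ 0 := by rintro rfl; exact (Nat.not_odd_zero) ho
      rw [if_neg h0, padicValNat.eq_zero_of_not_dvd (by rcases ho with ⟨s,hs⟩; omega)]
      omega
    · unfold nuR
      split
      · omega
      · rename_i hne
        have h1 : padicValNat 2 (j+1) ≥ 1 :=
          one_le_padicValNat_of_dvd (by omega) (by rcases ho with ⟨s,hs⟩; exact ⟨s+1, by omega⟩)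
        have := padicValNat_lt (n := n) (j := j+1) (by omega) (by omega)
        omega

/-- adjacency dichotomy -/
lemma adj_cases {n j m j' : ℕ} (hj : j < 2 ^ n) (hj' : j' < 2 ^ m)
    (h : rightPt n j = leftPt m j') :
    ((j + 1) * 2 ^ m = j' * 2 ^ n ∧ j + 1 < 2 ^ n ∧ j' ≠ 0) ∨ (j + 1 = 2 ^ n ∧ j' = 0) := by
  rw [rightPt, leftPt, addCircle_coe_eq_iff] at h
  obtain ⟨z, hz⟩ := h
  have h2n : (0:ℝ) < 2 ^ n := by positivity
  have h2m : (0:ℝ) < 2 ^ m := by positivity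
  have hb1 : (0:ℝ) < ((j:ℝ) + 1) / 2 ^ n := by positivity
  have hb2 : ((j:ℝ) + 1) / 2 ^ n ≤ 1 := by
    rw [div_le_one h2n]
    have : (j:ℝ) + 1 ≤ (2:ℝ) ^ n := by exact_mod_cast Nat.succ_le_of_lt hj
    linarith
  have hb3 : (0:ℝ) ≤ (j':ℝ) / 2 ^ m := by positivity
  have hb4 : (j':ℝ) / 2 ^ m < 1 := by
    rw [div_lt_one h2m]; exact_mod_cast hj'
  have hz01 : z = 0 ∨ z = 1 := by
    have : (-1:ℝ) < (z:ℤ) := by rw [← hz]; push_cast; linarith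
    have h1 : ((z:ℤ):ℝ) ≤ 1 := by rw [← hz]; linarith
    have := (by exact_mod_cast this : (-1:ℤ) < z)
    have := (by exact_mod_cast h1 : z ≤ 1)
    omega
  rcases hz01 with rfl | rfl
  · left
    have heq : ((j:ℝ) + 1) / 2 ^ n = (j':ℝ) / 2 ^ m := by
      push_cast at hz; linarith
    have hkey : ((j:ℕ) + 1) * 2 ^ m = j' * 2 ^ n := by
      have : ((j:ℝ) + 1) * 2 ^ m = (j':ℝ) * 2 ^ n := by
        field_simp at heq; linarith
      exact_mod_cast this
    refine ⟨hkey, ?_, ?_⟩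
    · rcases Nat.lt_or_ge (j+1) (2^n) with h | h
      · exact h
      · have hj1 : j + 1 = 2 ^ n := by omega
        rw [hj1] at hkey
        have := Nat.eq_of_mul_eq_mul_left (Nat.two_pow_pos n)
          (hkey.trans (mul_comm j' (2 ^ n)))
        omega
    · intro h0
      rw [h0, zero_mul] at hkey
      simp at hkey
  · right
    push_cast at hz
    have : ((j:ℝ) + 1) / 2 ^ n = (j':ℝ) / 2 ^ m + 1 := by linarith
    have h1 : ((j:ℝ)+1)/2^n = 1 ∧ (j':ℝ)/2^m = 0 := by constructor <;> linarith
    constructor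
    · have : (j:ℝ) + 1 = 2 ^ n := by
        have := h1.1; field_simp at this; linarith
      exact_mod_cast this
    · have h0 := h1.2
      rw [div_eq_zero_iff] at h0
      rcases h0 with h0 | h0
      · exact_mod_cast h0
      · exact absurd h0 (by positivity)

lemma padicValNat_mul_pow_eq {a m b n : ℕ} (ha : a ≠ 0) (hb : b ≠ 0)
    (h : a * 2 ^ m = b * 2 ^ n) : padicValNat 2 a + m = padicValNat 2 b + n := by
  have := congrArg (padicValNat 2) h
  rwa [padicValNat.mul ha (by positivity), padicValNat.mul hb (by positivity),
    padicValNat.prime_pow, padicValNat.prime_pow] at this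

/-- bridge: the shared point has a well-defined exact level -/
lemma nuR_eq_nuL {n j m j' : ℕ} (hj : j < 2 ^ n) (hj' : j' < 2 ^ m)
    (h : rightPt n j = leftPt m j') : nuR n j = nuL m j' := by
  rcases adj_cases hj hj' h with ⟨hkey, hlt, h0⟩ | ⟨h1, h0⟩
  · rw [nuR, if_neg (by omega), nuL, if_neg h0]
    have hv := padicValNat_mul_pow_eq (by omega) h0 hkey
    have hv1 : padicValNat 2 (j+1) < n := padicValNat_lt (by omega) hlt
    have hv2 : padicValNat 2 j' < m := padicValNat_lt h0 hj'
    omega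
  · rw [nuR, if_pos h1, nuL, if_pos h0]

/-- if two adjacent arcs have the same level and the shared point has full exact level,
they are siblings -/
lemma adj_siblings {n j j' : ℕ} (hn : 1 ≤ n) (hj : j < 2 ^ n) (hj' : j' < 2 ^ n)
    (h : rightPt n j = leftPt n j') (hnu : nuR n j = n) :
    j' = j + 1 ∧ j % 2 = 0 ∧ j + 1 < 2 ^ n := by
  rcases adj_cases hj hj' h with ⟨hkey, hlt, h0⟩ | ⟨h1, h0⟩
  · have hj' : j' = j + 1 := by
      have := Nat.eq_of_mul_eq_mul_right (Nat.two_pow_pos n) hkey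
      omega
    rw [nuR, if_neg (by omega)] at hnu
    have hv1 : padicValNat 2 (j+1) < n := padicValNat_lt (by omega) hlt
    have hv0 : padicValNat 2 (j+1) = 0 := by omega
    have : ¬ (2 ∣ (j+1)) := by
      intro hd
      have := one_le_padicValNat_of_dvd (by omega) hd
      omega
    refine ⟨hj', by omega, hlt⟩
  · rw [nuR, if_pos h1] at hnu
    omega

/-- two sibling arcs union to the parent arc -/
lemma sibling_union {n a : ℕ} (hn : 1 ≤ n) (ha : 2 * a + 1 < 2 ^ n) :
    dyadicArc n (2 * a) ∪ dyadicArc n (2 * a + 1) = dyadicArc (n - 1) a := by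
  obtain ⟨m, rfl⟩ : ∃ m, n = m + 1 := ⟨n - 1, by omega⟩
  unfold dyadicArc
  rw [← Set.image_union]
  congr 1
  push_cast
  norm_num
  rw [Set.Icc_union_Icc_eq_Icc]
  · have e1 : 2 * (a:ℝ) / 2 ^ (m+1) = (a:ℝ) / 2 ^ m := by
      rw [pow_succ]; field_simp
    have e2 : (2 * (a:ℝ) + 1 + 1) / 2 ^ (m+1) = ((a:ℝ) + 1) / 2 ^ m := by
      rw [pow_succ]; field_simp; ring
    rw [e1, e2]
  · exact (div_lt_div_of_pos_right (by push_cast; linarith) (by positivity)).le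
  · exact (div_lt_div_of_pos_right (by push_cast; linarith) (by positivity)).le

lemma dyadicArc_zero : dyadicArc 0 0 = Set.univ := by
  rw [Set.eq_univ_iff_forall]
  intro x
  induction x using QuotientAddGroup.induction_on with
  | H r =>
    refine ⟨Int.fract r, ?_, ?_⟩
    · simp only [Set.mem_Icc, Nat.cast_zero, pow_zero, zero_div, zero_add, one_div, div_one]
      exact ⟨Int.fract_nonneg r, (Int.fract_lt_one r).le⟩
    · show (_ : AddCircle (1:ℝ)) = _
      rw [QuotientAddGroup.eq_iff_sub_mem]
      refine AddSubgroup.mem_zmultiples_iff.2 ⟨-⌊r⌋, ?_⟩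
      rw [Int.fract, zsmul_eq_mul]
      push_cast; ring

lemma interior_dyadicArc_nonempty (n j : ℕ) : (interior (dyadicArc n j)).Nonempty := by
  have h2 : (0:ℝ) < 2 ^ n := by positivity
  have hlt : ((j : ℝ)) / 2 ^ n < ((j : ℝ) + 1) / 2 ^ n :=
    div_lt_div_of_pos_right (by linarith) h2
  have hopen : IsOpen ((fun r : ℝ => (r : AddCircle (1 : ℝ))) ''
      Set.Ioo ((j : ℝ) / 2 ^ n) (((j : ℝ) + 1) / 2 ^ n)) :=
    QuotientAddGroup.isOpenMap_coe _ isOpen_Ioo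
  have hsub : (fun r : ℝ => (r : AddCircle (1 : ℝ))) ''
      Set.Ioo ((j : ℝ) / 2 ^ n) (((j : ℝ) + 1) / 2 ^ n) ⊆ dyadicArc n j :=
    Set.image_mono Set.Ioo_subset_Icc_self
  exact ((Set.nonempty_Ioo.2 hlt).image _).mono (interior_maximal hsub hopen)

lemma chainUp (f : ℕ → ℕ) (a b : ℕ) (hf : ∀ m, a ≤ m → m + 1 ≤ b → f m < f (m + 1)) :
    ∀ k l, a ≤ k → k < l → l ≤ b → f k < f l := by
  intro k l hak hkl hlb
  induction l with
  | zero => omega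
  | succ l ih =>
    rcases Nat.lt_or_ge k l with h | h
    · exact lt_trans (ih h (by omega)) (hf l (by omega) hlb)
    · have hkl' : k = l := by omega
      subst hkl'; exact hf k hak hlb

lemma chainDown (f : ℕ → ℕ) (b : ℕ) (hf : ∀ m, m + 1 ≤ b → f (m + 1) < f m) :
    ∀ k l, k < l → l ≤ b → f l < f k := by
  intro k l hkl hlb
  induction l with
  | zero => omega
  | succ l ih =>
    rcases Nat.lt_or_ge k l with h | h
    · exact lt_trans (hf l hlb) (ih h (by omega))
    · have hkl' : k = l := by omega
      subst hkl'; exact hf k hlb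

/-- Structure of minimal chains: in a minimal chain of dyadic arcs, indexed so that the right
endpoint of each arc is the left endpoint of the next, there is either a unique arc or a
unique pair of adjacent arcs of maximal length (i.e. of minimal level); moreover, for any
index `istar` of an arc of maximal length, the levels are strictly decreasing before `istar`
and strictly increasing after `istar`. -/
theorem minimalChain_structure (N : ℕ) (c : Fin (N + 1) → ℕ × ℕ)
    (hvalid : ∀ k, (c k).2 < 2 ^ (c k).1)
    (hmin : IsMinimalChain N c)
    (hadj : ∀ i : Fin N,
      rightPt (c i.castSucc).1 (c i.castSucc).2 = leftPt (c i.succ).1 (c i.succ).2) :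
    ((∃ i₀ : Fin (N + 1), (∀ k, (c i₀).1 ≤ (c k).1) ∧
        ((∀ k, (c k).1 = (c i₀).1 → k = i₀) ∨
          ∃ i₁ : Fin (N + 1), (i₁ : ℕ) = (i₀ : ℕ) + 1 ∧ (c i₁).1 = (c i₀).1 ∧
            ∀ k, (c k).1 = (c i₀).1 → k = i₀ ∨ k = i₁))) ∧
    ∀ istar : Fin (N + 1), (∀ k, (c istar).1 ≤ (c k).1) →
      (∀ k l : Fin (N + 1), k < l → (l : ℕ) < (istar : ℕ) → (c l).1 < (c k).1) ∧
      (∀ k l : Fin (N + 1), (istar : ℕ) < (k : ℕ) → k < l → (c k).1 < (c l).1) := by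
  rcases Nat.eq_zero_or_pos N with rfl | hN
  · -- trivial case N = 0
    have hall : ∀ k : Fin 1, k = 0 := fun k => Subsingleton.elim k 0
    refine ⟨⟨0, fun k => by rw [hall k], Or.inl fun k _ => hall k⟩, ?_⟩
    intro istar _
    constructor
    · intro k l hkl hli
      exfalso
      have hk := k.isLt; have hl := l.isLt
      have := Fin.lt_def.mp hkl
      omega
    · intro k l hik hkl
      exfalso
      have hk := k.isLt; have hl := l.isLt
      have := Fin.lt_def.mp hkl
      omega
  · -- main case N ≥ 1
    -- all levels are positive
    have h1 : ∀ k : Fin (N + 1), 1 ≤ (c k).1 := by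
      intro k
      by_contra h
      have hk0 : (c k).1 = 0 := by omega
      have hj0 : (c k).2 = 0 := by
        have := hvalid k; rw [hk0] at this; simpa using this
      have harc : dyadicArc (c k).1 (c k).2 = Set.univ := by
        rw [hk0, hj0]; exact dyadicArc_zero
      by_cases hk : (k : ℕ) = 0
      · have hne : k ≠ ⟨1, by omega⟩ := by
          intro h; rw [Fin.ext_iff] at h; simp at h; omega
        have := hmin.1 k ⟨1, by omega⟩ hne
        rw [harc, interior_univ, Set.univ_inter] at this
        exact (interior_dyadicArc_nonempty _ _).ne_empty this
      · have hne : k ≠ ⟨0, by omega⟩ := by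
          intro h; exact hk (congrArg Fin.val h)
        have := hmin.1 k ⟨0, by omega⟩ hne
        rw [harc, interior_univ, Set.univ_inter] at this
        exact (interior_dyadicArc_nonempty _ _).ne_empty this
    -- reindex over ℕ
    set cc : ℕ → ℕ × ℕ := fun i => c ⟨min i N, Nat.lt_succ_of_le (min_le_right i N)⟩
      with hcc
    have cmk : ∀ (i : ℕ) (h : i < N + 1), c ⟨i, h⟩ = cc i := by
      intro i h
      simp only [hcc]
      congr 1
      exact Fin.ext (Nat.min_eq_left (by omega)).symm
    have cval : ∀ k : Fin (N + 1), c k = cc (k : ℕ) := fun k => cmk k.1 k.2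
    have hvalid' : ∀ i : ℕ, (cc i).2 < 2 ^ (cc i).1 := fun i => by
      rw [hcc]; exact hvalid _
    have h1' : ∀ i : ℕ, 1 ≤ (cc i).1 := fun i => by
      rw [hcc]; exact h1 _
    have hadj' : ∀ i : ℕ, i + 1 ≤ N →
        rightPt (cc i).1 (cc i).2 = leftPt (cc (i + 1)).1 (cc (i + 1)).2 := by
      intro i hi
      have h := hadj ⟨i, hi⟩
      rw [show (⟨i, hi⟩ : Fin N).castSucc = ⟨i, by omega⟩ from Fin.ext (by simp),
        show (⟨i, hi⟩ : Fin N).succ = ⟨i + 1, by omega⟩ from Fin.ext (by simp),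
        cmk i (by omega), cmk (i + 1) (by omega)] at h
      exact h
    have hbridge : ∀ i : ℕ, i + 1 ≤ N →
        nuR (cc i).1 (cc i).2 = nuL (cc (i + 1)).1 (cc (i + 1)).2 :=
      fun i hi => nuR_eq_nuL (hvalid' i) (hvalid' (i + 1)) (hadj' i hi)
    -- no two adjacent arcs of the same level with shared endpoint of full level
    have hB : ∀ i : ℕ, i + 1 ≤ N →
        ¬((cc (i + 1)).1 = (cc i).1 ∧ nuR (cc i).1 (cc i).2 = (cc i).1) := by
      rintro i hi ⟨he, hnu⟩
      have hadji := hadj' i hi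
      rw [he] at hadji
      have hv' : (cc (i + 1)).2 < 2 ^ (cc i).1 := by rw [← he]; exact hvalid' (i + 1)
      obtain ⟨hj', hpar, hlt⟩ := adj_siblings (h1' i) (hvalid' i) hv' hadji hnu
      obtain ⟨a, ha⟩ : ∃ a, (cc i).2 = 2 * a := ⟨(cc i).2 / 2, by omega⟩
      have hun := sibling_union (h1' i) (a := a) (by omega : 2 * a + 1 < 2 ^ (cc i).1)
      have hpow : 2 ^ (cc i).1 = 2 * 2 ^ ((cc i).1 - 1) := by
        rw [← pow_succ']
        congr 1
        have := h1' i; omega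
      refine hmin.2 {⟨i, by omega⟩, ⟨i + 1, by omega⟩} ?_
        ⟨(cc i).1 - 1, a, by omega, ?_⟩
      · rw [Finset.card_insert_of_notMem (by simp), Finset.card_singleton]
      · rw [Finset.set_biUnion_insert, Finset.set_biUnion_singleton]
        simp only [cmk]
        rw [he, hj', ha]
        exact hun
    have hsplit : ∀ i : ℕ,
        (nuL (cc i).1 (cc i).2 = (cc i).1 ∧ nuR (cc i).1 (cc i).2 < (cc i).1) ∨
        (nuL (cc i).1 (cc i).2 < (cc i).1 ∧ nuR (cc i).1 (cc i).2 = (cc i).1) :=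
      fun i => nu_split (h1' i) (hvalid' i)
    -- core step: failure to decrease forces strict increase
    have hC : ∀ i : ℕ, i + 2 ≤ N → (cc i).1 ≤ (cc (i + 1)).1 →
        (cc (i + 1)).1 < (cc (i + 2)).1 := by
      intro i hi hle
      have hb1 := hbridge i (by omega)
      have hb2 := hbridge (i + 1) (by omega)
      rw [(by omega : i + 1 + 1 = i + 2)] at hb2
      have hRle := nuR_le (cc i).1 (cc i).2
      have hmu2 : nuR (cc (i + 1)).1 (cc (i + 1)).2 = (cc (i + 1)).1 := by
        rcases hsplit (i + 1) with ⟨hLeq, _⟩ | ⟨_, hReq⟩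
        · exact absurd ⟨by omega, by omega⟩ (hB i (by omega))
        · exact hReq
      have hLle := nuL_le (cc (i + 2)).1 (cc (i + 2)).2
      have h12 : (cc (i + 1)).1 ≤ (cc (i + 2)).1 := by omega
      rcases Nat.lt_or_ge (cc (i + 1)).1 (cc (i + 2)).1 with h | h
      · exact h
      · have hB2 := hB (i + 1) (by omega)
        rw [(by omega : i + 1 + 1 = i + 2)] at hB2
        exact absurd ⟨by omega, hmu2⟩ hB2
    -- once non-decreasing, strictly increasing forever
    have hMono : ∀ i : ℕ, i + 2 ≤ N → (cc i).1 ≤ (cc (i + 1)).1 →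
        ∀ m, i + 1 ≤ m → m + 1 ≤ N → (cc m).1 < (cc (m + 1)).1 := by
      intro i hi hle m hm
      induction m, hm using Nat.le_induction with
      | base => intro h; exact hC i hi hle
      | succ m hm ih =>
        intro h
        exact hC m (by omega) (le_of_lt (ih (by omega)))
    -- part 2
    have hpart2 : ∀ istar : Fin (N + 1), (∀ k, (c istar).1 ≤ (c k).1) →
        (∀ k l : Fin (N + 1), k < l → (l : ℕ) < (istar : ℕ) → (c l).1 < (c k).1) ∧
        (∀ k l : Fin (N + 1), (istar : ℕ) < (k : ℕ) → k < l → (c k).1 < (c l).1) := by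
      intro istar hstar
      have histarN : (istar : ℕ) ≤ N := by have := istar.isLt; omega
      have hstar' : ∀ m : ℕ, (cc (istar : ℕ)).1 ≤ (cc m).1 := by
        intro m
        rw [← cval istar, hcc]
        exact hstar _
      constructor
      · intro k l hkl hli
        have hdec : ∀ m, m + 1 < (istar : ℕ) → (cc (m + 1)).1 < (cc m).1 := by
          intro m hm
          by_contra hcon
          push_neg at hcon
          have hinc := hMono m (by omega) hcon
          have hlt : (cc (m + 1)).1 < (cc (istar : ℕ)).1 :=
            chainUp (fun x => (cc x).1) (m + 1) N hinc (m + 1) (istar : ℕ)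
              le_rfl hm histarN
          have := hstar' (m + 1)
          omega
        have hkl' : (k : ℕ) < (l : ℕ) := Fin.lt_def.mp hkl
        rw [cval k, cval l]
        exact chainDown (fun x => (cc x).1) ((istar : ℕ) - 1)
          (fun m hm => hdec m (by omega)) (k : ℕ) (l : ℕ) hkl' (by omega)
      · intro k l hik hkl
        have hinc : ∀ m, (istar : ℕ) + 1 ≤ m → m + 1 ≤ N → (cc m).1 < (cc (m + 1)).1 :=
          fun m hm hmN => hMono (istar : ℕ) (by omega) (hstar' _) m hm hmN
        have hkl' : (k : ℕ) < (l : ℕ) := Fin.lt_def.mp hkl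
        have hlN : (l : ℕ) ≤ N := by have := l.isLt; omega
        rw [cval k, cval l]
        exact chainUp (fun x => (cc x).1) ((istar : ℕ) + 1) N hinc
          (k : ℕ) (l : ℕ) (by omega) hkl' hlN
    refine ⟨?_, hpart2⟩
    -- part 1: existence and uniqueness
    obtain ⟨i₀, -, hmin0⟩ := Finset.exists_min_image (Finset.univ : Finset (Fin (N + 1)))
      (fun k => (c k).1) ⟨0, Finset.mem_univ 0⟩
    have hTne : (Finset.univ.filter (fun k => (c k).1 = (c i₀).1)).Nonempty :=
      ⟨i₀, by simp⟩
    set i₀' := (Finset.univ.filter (fun k => (c k).1 = (c i₀).1)).min' hTne with hi₀'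
    have hmem := Finset.min'_mem _ hTne
    rw [← hi₀'] at hmem
    have hval : (c i₀').1 = (c i₀).1 := by
      have := Finset.mem_filter.mp hmem
      exact this.2
    have hminv : ∀ k, (c i₀').1 ≤ (c k).1 := fun k =>
      hval ▸ hmin0 k (Finset.mem_univ k)
    have hleast : ∀ k, (c k).1 = (c i₀').1 → i₀' ≤ k := fun k hk =>
      Finset.min'_le _ k (Finset.mem_filter.mpr ⟨Finset.mem_univ k, hk.trans hval⟩)
    have hmono := hpart2 i₀' hminv
    have hclass : ∀ k, (c k).1 = (c i₀').1 → k = i₀' ∨ (k : ℕ) = (i₀' : ℕ) + 1 := by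
      intro k hk
      have hge : (i₀' : ℕ) ≤ (k : ℕ) := Fin.le_def.mp (hleast k hk)
      rcases Nat.lt_or_ge (k : ℕ) ((i₀' : ℕ) + 2) with h | h
      · rcases Nat.eq_or_lt_of_le hge with h' | h'
        · exact Or.inl (Fin.ext h'.symm)
        · exact Or.inr (by omega)
      · exfalso
        have hkN := k.isLt
        have hi1 : (i₀' : ℕ) + 1 < N + 1 := by omega
        have hlt := hmono.2 ⟨(i₀' : ℕ) + 1, hi1⟩ k (by simp)
          (Fin.lt_def.mpr (by simp; omega))
        have hle := hminv ⟨(i₀' : ℕ) + 1, hi1⟩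
        omega
    refine ⟨i₀', hminv, ?_⟩
    by_cases hpair : ∃ k : Fin (N + 1), (k : ℕ) = (i₀' : ℕ) + 1 ∧ (c k).1 = (c i₀').1
    · obtain ⟨i₁, hi₁, hv⟩ := hpair
      exact Or.inr ⟨i₁, hi₁, hv, fun k hk =>
        (hclass k hk).imp id (fun h => Fin.ext (h.trans hi₁.symm))⟩
    · refine Or.inl fun k hk => ?_
      rcases hclass k hk with h | h
      · exact h
      · exact absurd ⟨k, h, hk⟩ hpair
end
end

section
/- For each n ∈ ℕ, the map f_n : Γ_{n+1} → Γ_n is 1-Lipschitz; that is, for all x, y ∈ 𝕊, d_n(f_n(x), f_n(y)) ≤ d_{n+1}(x,y). -/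
noncomputable section

/-- The piecewise-linear folding of `[0,1]`: it maps `[0,1/4]` onto `[0,1/2]`,
`[1/4,3/8]` onto `[1/2,3/4]`, `[3/8,1/2]` onto `[1/2,3/4]` reversing orientation,
`[1/2,5/8]` onto `[1/4,1/2]` reversing orientation, `[5/8,3/4]` onto `[1/4,1/2]`,
and `[3/4,1]` onto `[1/2,1]`, each piece linearly. -/
def foldPhi (t : ℝ) : ℝ :=
  if t ≤ 3 / 8 then 2 * t else if t ≤ 5 / 8 then 3 / 2 - 2 * t else 2 * t - 1

/-- The canonical representative in `[0,1)` of a point of the circle. -/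
def circRep (x : AddCircle (1 : ℝ)) : ℝ := ((AddCircle.equivIco 1 0) x).1

/-- The map `f_n : 𝕊 → 𝕊`: on each dyadic arc `I` of level `n`, it is the identity if the
children of `I` have `Δ`-value half that of `I`, and the folding map of `I` if the children
have `Δ`-value equal to that of `I`. -/
def foldMap (Δ : ℕ → ℕ → ℝ) (n : ℕ) (x : AddCircle (1 : ℝ)) : AddCircle (1 : ℝ) :=
  let t : ℝ := circRep x
  let j : ℕ := ⌊t * 2 ^ n⌋₊
  if Δ (n + 1) (2 * j) = Δ n j then
    (((((j : ℝ) + foldPhi (t * 2 ^ n - (j : ℝ))) / 2 ^ n) : ℝ) : AddCircle (1 : ℝ))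
  else x

/-- The composition `F_{m,n} = f_m ∘ f_{m+1} ∘ ⋯ ∘ f_n` (the identity if `n < m`). -/
def Fchain (Δ : ℕ → ℕ → ℝ) (m : ℕ) : ℕ → AddCircle (1 : ℝ) → AddCircle (1 : ℝ)
  | 0 => if m = 0 then foldMap Δ 0 else id
  | n + 1 => if m ≤ n then Fchain Δ m n ∘ foldMap Δ (n + 1)
      else if m = n + 1 then foldMap Δ (n + 1) else id

/-- The set `𝒟_k` of dyadic points of level `k` in the circle. -/
def Dpts (k : ℕ) : Set (AddCircle (1 : ℝ)) :=
  {x | ∃ j : ℕ, x = (((j : ℝ) / 2 ^ k : ℝ) : AddCircle (1 : ℝ))}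

/-- The set `𝒟 = ⋃ k, 𝒟_k` of all dyadic points of the circle. -/
def DptsAll : Set (AddCircle (1 : ℝ)) := ⋃ k, Dpts k

/-- `F` is the map `F_m : Γ → Γ_m`: it is `1`-Lipschitz from `d_Δ` to `d_m` and agrees on
dyadic points with the (eventually stable) limit of the maps `F_{m,n}` as `n → ∞`. -/
def IsLimitMap (Δ : ℕ → ℕ → ℝ) (m : ℕ) (F : AddCircle (1 : ℝ) → AddCircle (1 : ℝ)) : Prop :=
  (∀ x y : AddCircle (1 : ℝ), dOf (trunc Δ m) (F x) (F y) ≤ dOf Δ x y) ∧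
  (∀ x ∈ DptsAll, ∃ N : ℕ, ∀ n ≥ N, Fchain Δ m n x = F x)

/-- A subset `U` of a space with a distance function `d` is `δ`-connected if every pair of
points of `U` is joined by a finite sequence of points of `U` with consecutive
distances at most `δ`. -/
def DConn {α : Type*} (d : α → α → ℝ) (δ : ℝ) (U : Set α) : Prop :=
  ∀ x ∈ U, ∀ y ∈ U, ∃ (N : ℕ) (c : Fin (N + 1) → α),
    (∀ i, c i ∈ U) ∧ c 0 = x ∧ c (Fin.last N) = y ∧
      ∀ i : Fin N, d (c i.castSucc) (c i.succ) ≤ δ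

/-- `U` is a `δ`-component of `S`: a maximal `δ`-connected subset of `S`. -/
def DComp {α : Type*} (d : α → α → ℝ) (δ : ℝ) (S U : Set α) : Prop :=
  U ⊆ S ∧ DConn d δ U ∧ ∀ V : Set α, U ⊆ V → V ⊆ S → DConn d δ V → V = U

/-- The diameter of a set with respect to a distance function `d`. -/
def ddiam {α : Type*} (d : α → α → ℝ) (S : Set α) : ℝ :=
  sSup {r | ∃ x ∈ S, ∃ y ∈ S, r = d x y}

def qIdx (r p : ℕ) : ℕ :=
  if r ≤ 1 then 0
  else if 8 * (p + 1) ≤ 3 * 2 ^ r then p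
  else if 8 * p < 5 * 2 ^ r then 3 * 2 ^ (r - 2) - (p + 1)
  else p - 2 ^ (r - 1)

lemma foldPhi_zero : foldPhi 0 = 0 := by norm_num [foldPhi]
lemma foldPhi_one : foldPhi 1 = 1 := by norm_num [foldPhi]
lemma foldPhi_mem01 {s : ℝ} (h0 : 0 ≤ s) (h1 : s ≤ 1) : 0 ≤ foldPhi s ∧ foldPhi s ≤ 1 := by
  unfold foldPhi; split_ifs <;> constructor <;> linarith

lemma pow_facts {r : ℕ} (hr : 2 ≤ r) : 2 ^ r = 4 * 2 ^ (r - 2) ∧ 2 ^ (r - 1) = 2 * 2 ^ (r - 2) := by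
  obtain ⟨k, rfl⟩ : ∃ k, r = k + 2 := ⟨r - 2, by omega⟩
  simp only [show k + 2 - 2 = k by omega, show k + 2 - 1 = k + 1 by omega]
  constructor <;> ring

lemma qIdx_cases (r p : ℕ) (hr : 2 ≤ r) (hp : p < 2 ^ r) :
    (8 * (p + 1) ≤ 12 * 2 ^ (r - 2) ∧ qIdx r p = p) ∨
    ((3 * 2 ^ (r - 2) ≤ 2 * p + 1 ∧ 2 * p + 1 ≤ 5 * 2 ^ (r - 2)) ∧
      qIdx r p + (p + 1) = 3 * 2 ^ (r - 2)) ∨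
    (5 * 2 ^ (r - 2) ≤ 2 * p ∧ qIdx r p + 2 * 2 ^ (r - 2) = p) := by
  obtain ⟨c4, c2⟩ := pow_facts hr
  unfold qIdx
  split_ifs with h0 h1 h2
  · omega
  · left; omega
  · right; left; omega
  · right; right; omega

lemma qIdx_lt (r p : ℕ) (hr : 1 ≤ r) (hp : p < 2 ^ r) : qIdx r p < 2 ^ (r - 1) := by
  rcases Nat.lt_or_ge r 2 with h | h
  · have : r = 1 := by omega
    subst this
    simp [qIdx]
  · obtain ⟨c4, c2⟩ := pow_facts h
    rcases qIdx_cases r p h hp with ⟨h1, h2⟩ | ⟨⟨ha, hb⟩, h2⟩ | ⟨h1, h2⟩ <;> omega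

lemma foldPhi_scaled (E P Q s : ℝ) (hE : 1 ≤ E)
    (h1 : P ≤ s * (4 * E)) (h2 : s * (4 * E) ≤ P + 1)
    (hcase : (8 * (P + 1) ≤ 12 * E ∧ Q = P) ∨
      ((3 * E ≤ 2 * P + 1 ∧ 2 * P + 1 ≤ 5 * E) ∧ Q = 3 * E - (P + 1)) ∨
      (5 * E ≤ 2 * P ∧ Q = P - 2 * E)) :
    Q ≤ foldPhi s * (2 * E) ∧ foldPhi s * (2 * E) ≤ Q + 1 := by
  have hE0 : (0:ℝ) ≤ 4 * E := by linarith
  unfold foldPhi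
  split_ifs with hA hB
  · have hA' : s * (4 * E) ≤ 3 / 8 * (4 * E) := mul_le_mul_of_nonneg_right hA hE0
    rcases hcase with ⟨hc, rfl⟩ | ⟨⟨hc1, hc2⟩, rfl⟩ | ⟨hc, rfl⟩ <;> constructor <;> nlinarith
  · have hA' : 3 / 8 * (4 * E) ≤ s * (4 * E) :=
      mul_le_mul_of_nonneg_right (le_of_not_ge hA) hE0
    have hB' : s * (4 * E) ≤ 5 / 8 * (4 * E) := mul_le_mul_of_nonneg_right hB hE0
    rcases hcase with ⟨hc, rfl⟩ | ⟨⟨hc1, hc2⟩, rfl⟩ | ⟨hc, rfl⟩ <;> constructor <;> nlinarith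
  · have hB' : 5 / 8 * (4 * E) ≤ s * (4 * E) :=
      mul_le_mul_of_nonneg_right (le_of_not_ge hB) hE0
    rcases hcase with ⟨hc, rfl⟩ | ⟨⟨hc1, hc2⟩, rfl⟩ | ⟨hc, rfl⟩ <;> constructor <;> nlinarith

lemma foldPhi_mem (r p : ℕ) (hr : 1 ≤ r) (hp : p < 2 ^ r) {s : ℝ}
    (h1 : (p : ℝ) / 2 ^ r ≤ s) (h2 : s ≤ ((p : ℝ) + 1) / 2 ^ r) :
    (qIdx r p : ℝ) / 2 ^ (r - 1) ≤ foldPhi s ∧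
      foldPhi s ≤ ((qIdx r p : ℝ) + 1) / 2 ^ (r - 1) := by
  have hpow : (0:ℝ) < (2:ℝ) ^ r := by positivity
  have hpow1 : (0:ℝ) < (2:ℝ) ^ (r - 1) := by positivity
  rcases Nat.lt_or_ge r 2 with hlt | hge
  · have hr1 : r = 1 := by omega
    subst hr1
    have hp1 : p = 0 ∨ p = 1 := by omega
    have hs0 : 0 ≤ s := le_trans (by positivity) h1
    have hs1 : s ≤ 1 := by
      refine h2.trans ?_
      rw [div_le_one hpow]
      have : (p:ℝ) + 1 ≤ 2 := by rcases hp1 with h | h <;> simp [h] <;> norm_num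
      simpa using this
    obtain ⟨a, b⟩ := foldPhi_mem01 hs0 hs1
    simp only [qIdx, if_pos (le_refl 1)]
    norm_num
    exact ⟨a, b⟩
  · obtain ⟨c4, c2⟩ := pow_facts hge
    have hE1 : (1:ℝ) ≤ ((2 ^ (r - 2) : ℕ) : ℝ) := by exact_mod_cast Nat.one_le_two_pow
    have h4 : (2:ℝ) ^ r = 4 * ((2 ^ (r - 2) : ℕ) : ℝ) := by exact_mod_cast c4
    have h2e : (2:ℝ) ^ (r - 1) = 2 * ((2 ^ (r - 2) : ℕ) : ℝ) := by exact_mod_cast c2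
    have hs1 : (p : ℝ) ≤ s * (4 * ((2 ^ (r - 2) : ℕ) : ℝ)) := by
      rw [← h4]; exact (div_le_iff₀ hpow).mp h1
    have hs2 : s * (4 * ((2 ^ (r - 2) : ℕ) : ℝ)) ≤ (p : ℝ) + 1 := by
      rw [← h4]; exact (le_div_iff₀ hpow).mp h2
    have key := foldPhi_scaled ((2 ^ (r - 2) : ℕ) : ℝ) (p : ℝ) ((qIdx r p : ℕ) : ℝ) s hE1 hs1 hs2 ?_
    · constructor
      · rw [div_le_iff₀ hpow1, h2e]; exact key.1
      · rw [le_div_iff₀ hpow1, h2e]; exact key.2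
    · rcases qIdx_cases r p hge hp with ⟨ha, hb⟩ | ⟨⟨ha, hb⟩, hq⟩ | ⟨ha, hq⟩
      · left
        constructor
        · exact_mod_cast ha
        · exact_mod_cast hb
      · right; left
        have ha' : 3 * ((2 ^ (r-2) : ℕ):ℝ) ≤ 2 * (p:ℝ) + 1 := by exact_mod_cast ha
        have hb' : 2 * (p:ℝ) + 1 ≤ 5 * ((2 ^ (r-2) : ℕ):ℝ) := by exact_mod_cast hb
        have hq' : ((qIdx r p : ℕ) : ℝ) + ((p:ℝ) + 1) = 3 * ((2 ^ (r-2) : ℕ):ℝ) := by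
          exact_mod_cast hq
        exact ⟨⟨ha', hb'⟩, by linarith⟩
      · right; right
        have ha' : 5 * ((2 ^ (r-2) : ℕ):ℝ) ≤ 2 * (p:ℝ) := by exact_mod_cast ha
        have hq' : ((qIdx r p : ℕ) : ℝ) + 2 * ((2 ^ (r-2) : ℕ):ℝ) = (p:ℝ) := by
          exact_mod_cast hq
        exact ⟨ha', by linarith⟩

lemma coe_circRep (x : AddCircle (1:ℝ)) : ((circRep x : ℝ) : AddCircle (1:ℝ)) = x :=
  (AddCircle.equivIco 1 0).symm_apply_apply x
lemma circRep_coe (r : ℝ) : circRep ((r : ℝ) : AddCircle (1:ℝ)) = Int.fract r := by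
  have := AddCircle.coe_equivIco_mk_apply (1:ℝ) r
  simpa [circRep] using this
lemma circRep_mem (x : AddCircle (1:ℝ)) : circRep x ∈ Set.Ico (0:ℝ) 1 := by
  have := ((AddCircle.equivIco 1 0) x).2
  simpa [circRep] using this

/-- if `r * 2^n` is an integer then `foldMap` fixes `↑r`. -/
lemma foldMap_coe_int (Δ : ℕ → ℕ → ℝ) (n : ℕ) (r : ℝ) (k : ℤ) (hk : r * 2 ^ n = k) :
    foldMap Δ n ((r : ℝ) : AddCircle (1:ℝ)) = ((r : ℝ) : AddCircle (1:ℝ)) := by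
  set x := ((r : ℝ) : AddCircle (1:ℝ)) with hx
  have hfr : circRep x = r - ⌊r⌋ := by rw [hx, circRep_coe]; rfl
  have hk2 : circRep x * 2 ^ n = ((k - ⌊r⌋ * 2 ^ n : ℤ) : ℝ) := by
    rw [hfr, sub_mul, hk]; push_cast; ring
  have hK0 : (0:ℝ) ≤ ((k - ⌊r⌋ * 2 ^ n : ℤ) : ℝ) := by
    rw [← hk2]; exact mul_nonneg (circRep_mem x).1 (by positivity)
  obtain ⟨KN, hKN⟩ : ∃ KN : ℕ, circRep x * 2 ^ n = (KN : ℝ) := by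
    refine ⟨(k - ⌊r⌋ * 2 ^ n).toNat, ?_⟩
    rw [hk2]
    exact_mod_cast (congrArg (fun z : ℤ => (z : ℝ))
      (Int.toNat_of_nonneg (by exact_mod_cast hK0))).symm
  have hfloor : ⌊circRep x * 2 ^ n⌋₊ = KN := by rw [hKN, Nat.floor_natCast]
  simp only [foldMap]
  rw [hfloor]
  split_ifs with h
  · rw [← hKN]
    have harg : circRep x * 2 ^ n - circRep x * 2 ^ n = 0 := by ring
    rw [harg, foldPhi_zero, add_zero]
    rw [mul_div_assoc, div_self (by positivity : ((2:ℝ)^n) ≠ 0), mul_one]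
    exact coe_circRep x
  · rfl

/-- generic position: `r ∈ [0,1]`, `r * 2^n` not an integer, floor between `i` and `i+1`. -/
lemma foldMap_coe_generic (Δ : ℕ → ℕ → ℝ) (n : ℕ) (r : ℝ) (i : ℕ)
    (hr0 : 0 ≤ r) (hr1 : r ≤ 1)
    (hi : (i : ℝ) ≤ r * 2 ^ n) (hi' : r * 2 ^ n ≤ (i : ℝ) + 1)
    (hnint : ∀ k : ℤ, r * 2 ^ n ≠ (k : ℝ)) :
    foldMap Δ n ((r : ℝ) : AddCircle (1:ℝ)) =
      (if Δ (n + 1) (2 * i) = Δ n i then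
        ((((i : ℝ) + foldPhi (r * 2 ^ n - (i : ℝ))) / 2 ^ n : ℝ) : AddCircle (1:ℝ))
      else ((r : ℝ) : AddCircle (1:ℝ))) := by
  have hrlt : r < 1 := by
    rcases lt_or_eq_of_le hr1 with h | h
    · exact h
    · exact absurd (hnint (2 ^ n) (by rw [h, one_mul]; push_cast; ring)) (by simp)
  have hcr : circRep ((r : ℝ) : AddCircle (1:ℝ)) = r := by
    rw [circRep_coe]; exact Int.fract_eq_self.mpr ⟨hr0, hrlt⟩
  have hilt : r * 2 ^ n < (i : ℝ) + 1 := by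
    rcases lt_or_eq_of_le hi' with h | h
    · exact h
    · exact absurd (hnint ((i : ℤ) + 1) (by push_cast; linarith)) (by simp)
  have hfloor : ⌊r * 2 ^ n⌋₊ = i := by
    rw [Nat.floor_eq_iff (by positivity)]
    exact ⟨hi, by push_cast; linarith⟩
  simp only [foldMap, hcr, hfloor]

lemma hr_le_one {m j : ℕ} (hj : j < 2 ^ m) {r : ℝ} (hr2 : r ≤ ((j : ℝ) + 1) / 2 ^ m) :
    r ≤ 1 := by
  refine hr2.trans ?_
  rw [div_le_one (by positivity)]
  exact_mod_cast Nat.succ_le_of_lt hj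

lemma rep_floor (n m j : ℕ) (hm : n < m) (hj : j < 2 ^ m) {r : ℝ}
    (hr1 : (j : ℝ) / 2 ^ m ≤ r) (hr2 : r ≤ ((j : ℝ) + 1) / 2 ^ m) :
    ((j / 2 ^ (m - n) : ℕ) : ℝ) ≤ r * 2 ^ n ∧
      r * 2 ^ n ≤ ((j / 2 ^ (m - n) : ℕ) : ℝ) + 1 := by
  have hd := Nat.div_add_mod j (2 ^ (m - n))
  have hplt : j % 2 ^ (m - n) < 2 ^ (m - n) := Nat.mod_lt _ (by positivity)
  have hkey : (2 : ℝ) ^ m = 2 ^ n * 2 ^ (m - n) := by rw [← pow_add]; congr 1; omega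
  have h2m : (0 : ℝ) < 2 ^ m := by positivity
  have h2mn : (0 : ℝ) < (2 : ℝ) ^ (m - n) := by positivity
  have hjr : (j : ℝ) ≤ r * 2 ^ m := (div_le_iff₀ h2m).mp hr1
  have hjr2 : r * 2 ^ m ≤ (j : ℝ) + 1 := (le_div_iff₀ h2m).mp hr2
  have hdr : (2 : ℝ) ^ (m - n) * ((j / 2 ^ (m - n) : ℕ) : ℝ) + ((j % 2 ^ (m - n) : ℕ) : ℝ)
      = (j : ℝ) := by exact_mod_cast hd
  have hmodnn : (0 : ℝ) ≤ ((j % 2 ^ (m - n) : ℕ) : ℝ) := by positivity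
  have hmodlt : ((j % 2 ^ (m - n) : ℕ) : ℝ) + 1 ≤ (2 : ℝ) ^ (m - n) := by
    have : ((j % 2 ^ (m - n) : ℕ) : ℝ) + 1 ≤ ((2 ^ (m - n) : ℕ) : ℝ) := by
      exact_mod_cast Nat.succ_le_of_lt hplt
    push_cast at this; linarith
  constructor
  · rw [← mul_le_mul_iff_of_pos_right h2mn]
    have e : r * 2 ^ n * 2 ^ (m - n) = r * 2 ^ m := by rw [hkey]; ring
    rw [e]
    linarith
  · rw [← mul_le_mul_iff_of_pos_right h2mn]
    have e : r * 2 ^ n * 2 ^ (m - n) = r * 2 ^ m := by rw [hkey]; ring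
    rw [e]
    linarith

lemma rep_srange (n m j : ℕ) (hm : n < m) (hj : j < 2 ^ m) {r : ℝ}
    (hr1 : (j : ℝ) / 2 ^ m ≤ r) (hr2 : r ≤ ((j : ℝ) + 1) / 2 ^ m) :
    ((j % 2 ^ (m - n) : ℕ) : ℝ) / 2 ^ (m - n) ≤ r * 2 ^ n - ((j / 2 ^ (m - n) : ℕ) : ℝ) ∧
      r * 2 ^ n - ((j / 2 ^ (m - n) : ℕ) : ℝ)
        ≤ (((j % 2 ^ (m - n) : ℕ) : ℝ) + 1) / 2 ^ (m - n) := by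
  have hd := Nat.div_add_mod j (2 ^ (m - n))
  have hkey : (2 : ℝ) ^ m = 2 ^ n * 2 ^ (m - n) := by rw [← pow_add]; congr 1; omega
  have h2m : (0 : ℝ) < 2 ^ m := by positivity
  have h2mn : (0 : ℝ) < (2 : ℝ) ^ (m - n) := by positivity
  have hjr : (j : ℝ) ≤ r * 2 ^ m := (div_le_iff₀ h2m).mp hr1
  have hjr2 : r * 2 ^ m ≤ (j : ℝ) + 1 := (le_div_iff₀ h2m).mp hr2
  have hdr : (2 : ℝ) ^ (m - n) * ((j / 2 ^ (m - n) : ℕ) : ℝ) + ((j % 2 ^ (m - n) : ℕ) : ℝ)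
      = (j : ℝ) := by exact_mod_cast hd
  constructor
  · rw [div_le_iff₀ h2mn]
    have e : (r * 2 ^ n - ((j / 2 ^ (m - n) : ℕ) : ℝ)) * 2 ^ (m - n)
        = r * 2 ^ m - 2 ^ (m - n) * ((j / 2 ^ (m - n) : ℕ) : ℝ) := by rw [hkey]; ring
    rw [e]; linarith
  · rw [le_div_iff₀ h2mn]
    have e : (r * 2 ^ n - ((j / 2 ^ (m - n) : ℕ) : ℝ)) * 2 ^ (m - n)
        = r * 2 ^ m - 2 ^ (m - n) * ((j / 2 ^ (m - n) : ℕ) : ℝ) := by rw [hkey]; ring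
    rw [e]; linarith

lemma foldMap_mapsTo_le (Δ : ℕ → ℕ → ℝ) (n m j : ℕ) (hm : m ≤ n) (hj : j < 2 ^ m) :
    Set.MapsTo (foldMap Δ n) (dyadicArc m j) (dyadicArc m j) := by
  rintro x ⟨r, ⟨hr1, hr2⟩, rfl⟩
  have h2m : (0 : ℝ) < 2 ^ m := by positivity
  have h2n : (0 : ℝ) < (2 : ℝ) ^ n := by positivity
  have hr0 : 0 ≤ r := le_trans (by positivity) hr1
  have hrle1 : r ≤ 1 := hr_le_one hj hr2
  by_cases hint : ∃ k : ℤ, r * 2 ^ n = (k : ℝ)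
  · obtain ⟨k, hk⟩ := hint
    rw [foldMap_coe_int Δ n r k hk]
    exact ⟨r, ⟨hr1, hr2⟩, rfl⟩
  · push_neg at hint
    have hge : ((⌊r * 2 ^ n⌋₊ : ℕ) : ℝ) ≤ r * 2 ^ n := Nat.floor_le (by positivity)
    have hlt : r * 2 ^ n < ((⌊r * 2 ^ n⌋₊ : ℕ) : ℝ) + 1 := Nat.lt_floor_add_one _
    rw [foldMap_coe_generic Δ n r ⌊r * 2 ^ n⌋₊ hr0 hrle1 hge hlt.le hint]
    split_ifs with hc
    · set i0 := ⌊r * 2 ^ n⌋₊ with hi0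
      have hkey : (2 : ℝ) ^ n = 2 ^ (n - m) * 2 ^ m := by rw [← pow_add]; congr 1; omega
      have h2nm : (0 : ℝ) < (2 : ℝ) ^ (n - m) := by positivity
      have hnat1 : ((j * 2 ^ (n - m) : ℕ) : ℝ) ≤ (i0 : ℝ) := by
        have : (j * 2 ^ (n - m) : ℕ) ≤ i0 := by
          rw [hi0]
          apply Nat.le_floor
          push_cast
          have h1 : (j : ℝ) ≤ r * 2 ^ m := (div_le_iff₀ h2m).mp hr1
          have h2 : (j : ℝ) * 2 ^ (n - m) ≤ (r * 2 ^ m) * 2 ^ (n - m) :=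
            mul_le_mul_of_nonneg_right h1 h2nm.le
          calc (j : ℝ) * 2 ^ (n - m) ≤ (r * 2 ^ m) * 2 ^ (n - m) := h2
            _ = r * 2 ^ n := by rw [hkey]; ring
        exact_mod_cast this
      have hnat2 : (i0 : ℝ) + 1 ≤ (((j + 1) * 2 ^ (n - m) : ℕ) : ℝ) := by
        have hup : r * 2 ^ n ≤ (((j + 1) * 2 ^ (n - m) : ℕ) : ℝ) := by
          push_cast
          have h1 : r * 2 ^ m ≤ (j : ℝ) + 1 := (le_div_iff₀ h2m).mp hr2
          calc r * 2 ^ n = (r * 2 ^ m) * 2 ^ (n - m) := by rw [hkey]; ring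
            _ ≤ ((j : ℝ) + 1) * 2 ^ (n - m) := mul_le_mul_of_nonneg_right h1 h2nm.le
        have : i0 < (j + 1) * 2 ^ (n - m) := by
          by_contra hcon
          push_neg at hcon
          have hc1 : (((j + 1) * 2 ^ (n - m) : ℕ) : ℝ) ≤ (i0 : ℝ) := by exact_mod_cast hcon
          have : r * 2 ^ n = (i0 : ℝ) := le_antisymm (hup.trans hc1) hge
          exact hint (i0 : ℤ) (by exact_mod_cast this)
        exact_mod_cast this
      have hs0 : 0 ≤ r * 2 ^ n - (i0 : ℝ) := by linarith
      have hs1 : r * 2 ^ n - (i0 : ℝ) ≤ 1 := by linarith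
      obtain ⟨hp0, hp1⟩ := foldPhi_mem01 hs0 hs1
      refine ⟨((i0 : ℝ) + foldPhi (r * 2 ^ n - (i0 : ℝ))) / 2 ^ n, ⟨?_, ?_⟩, rfl⟩
      · rw [div_le_div_iff₀ h2m h2n]
        have e1 : (j : ℝ) * 2 ^ n = ((j * 2 ^ (n - m) : ℕ) : ℝ) * 2 ^ m := by
          push_cast; rw [hkey]; ring
        rw [e1]
        have := mul_le_mul_of_nonneg_right hnat1 h2m.le
        nlinarith
      · rw [div_le_div_iff₀ h2n h2m]
        have e1 : ((j : ℝ) + 1) * 2 ^ n = (((j + 1) * 2 ^ (n - m) : ℕ) : ℝ) * 2 ^ m := by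
          push_cast; rw [hkey]; ring
        rw [e1]
        have := mul_le_mul_of_nonneg_right hnat2 h2m.le
        nlinarith
    · exact ⟨r, ⟨hr1, hr2⟩, rfl⟩

lemma foldMap_eq_self_of_ne (Δ : ℕ → ℕ → ℝ) (n m j : ℕ) (hm : n < m) (hj : j < 2 ^ m)
    (hne : ¬ Δ (n + 1) (2 * (j / 2 ^ (m - n))) = Δ n (j / 2 ^ (m - n))) :
    ∀ x ∈ dyadicArc m j, foldMap Δ n x = x := by
  rintro x ⟨r, ⟨hr1, hr2⟩, rfl⟩
  have hr0 : 0 ≤ r := le_trans (by positivity) hr1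
  have hrle1 : r ≤ 1 := hr_le_one hj hr2
  by_cases hint : ∃ k : ℤ, r * 2 ^ n = (k : ℝ)
  · obtain ⟨k, hk⟩ := hint; exact foldMap_coe_int Δ n r k hk
  · push_neg at hint
    obtain ⟨hb1, hb2⟩ := rep_floor n m j hm hj hr1 hr2
    rw [foldMap_coe_generic Δ n r (j / 2 ^ (m - n)) hr0 hrle1 hb1 hb2 hint, if_neg hne]

lemma foldMap_mapsTo_fold (Δ : ℕ → ℕ → ℝ) (n m j : ℕ) (hm : n < m) (hj : j < 2 ^ m)
    (heq : Δ (n + 1) (2 * (j / 2 ^ (m - n))) = Δ n (j / 2 ^ (m - n))) :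
    Set.MapsTo (foldMap Δ n) (dyadicArc m j)
      (dyadicArc (m - 1)
        ((j / 2 ^ (m - n)) * 2 ^ (m - n - 1) + qIdx (m - n) (j % 2 ^ (m - n)))) := by
  rintro x ⟨r, ⟨hr1, hr2⟩, rfl⟩
  have h2n : (0 : ℝ) < (2 : ℝ) ^ n := by positivity
  have h2e : (0 : ℝ) < (2 : ℝ) ^ (m - n - 1) := by positivity
  have hr0 : 0 ≤ r := le_trans (by positivity) hr1
  have hrle1 : r ≤ 1 := hr_le_one hj hr2
  have hplt : j % 2 ^ (m - n) < 2 ^ (m - n) := Nat.mod_lt _ (by positivity)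
  obtain ⟨hs1, hs2⟩ := rep_srange n m j hm hj hr1 hr2
  have hphi := foldPhi_mem (m - n) (j % 2 ^ (m - n)) (by omega) hplt hs1 hs2
  have hmain : foldMap Δ n ((r : ℝ) : AddCircle (1:ℝ)) =
      (((((j / 2 ^ (m - n) : ℕ) : ℝ) + foldPhi (r * 2 ^ n - ((j / 2 ^ (m - n) : ℕ) : ℝ)))
        / 2 ^ n : ℝ) : AddCircle (1:ℝ)) := by
    by_cases hint : ∃ k : ℤ, r * 2 ^ n = (k : ℝ)
    · obtain ⟨k, hk⟩ := hint
      rw [foldMap_coe_int Δ n r k hk]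
      have hsint : r * 2 ^ n - ((j / 2 ^ (m - n) : ℕ) : ℝ)
          = ((k - (j / 2 ^ (m - n) : ℕ) : ℤ) : ℝ) := by
        rw [Int.cast_sub, Int.cast_natCast, hk]
      have hs0 : (0 : ℝ) ≤ r * 2 ^ n - ((j / 2 ^ (m - n) : ℕ) : ℝ) :=
        le_trans (by positivity) hs1
      have hsle : r * 2 ^ n - ((j / 2 ^ (m - n) : ℕ) : ℝ) ≤ 1 := by
        refine hs2.trans ?_
        rw [div_le_one (by positivity)]
        have : ((j % 2 ^ (m - n) : ℕ) : ℝ) + 1 ≤ ((2 ^ (m - n) : ℕ) : ℝ) := by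
          exact_mod_cast Nat.succ_le_of_lt hplt
        push_cast at this ⊢; linarith
      have h01 : (k - (j / 2 ^ (m - n) : ℕ) : ℤ) = 0 ∨ (k - (j / 2 ^ (m - n) : ℕ) : ℤ) = 1 := by
        rw [hsint] at hs0 hsle
        have a1 : (0 : ℤ) ≤ k - (j / 2 ^ (m - n) : ℕ) := by exact_mod_cast hs0
        have a2 : (k - (j / 2 ^ (m - n) : ℕ) : ℤ) ≤ 1 := by exact_mod_cast hsle
        omega
      rcases h01 with h | h <;> rw [hsint, h]
      · rw [Int.cast_zero, foldPhi_zero, add_zero]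
        have hreq : r = ((j / 2 ^ (m - n) : ℕ) : ℝ) / 2 ^ n := by
          rw [eq_div_iff (ne_of_gt h2n)]
          have : r * 2 ^ n - ((j / 2 ^ (m - n) : ℕ) : ℝ) = 0 := by rw [hsint, h]; norm_num
          linarith
        rw [← hreq]
      · rw [Int.cast_one, foldPhi_one]
        have hreq : r = (((j / 2 ^ (m - n) : ℕ) : ℝ) + 1) / 2 ^ n := by
          rw [eq_div_iff (ne_of_gt h2n)]
          have : r * 2 ^ n - ((j / 2 ^ (m - n) : ℕ) : ℝ) = 1 := by rw [hsint, h]; norm_num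
          linarith
        rw [← hreq]
    · push_neg at hint
      obtain ⟨hb1, hb2⟩ := rep_floor n m j hm hj hr1 hr2
      rw [foldMap_coe_generic Δ n r (j / 2 ^ (m - n)) hr0 hrle1 hb1 hb2 hint, if_pos heq]
  rw [hmain]
  have hkey : (2 : ℝ) ^ (m - 1) = 2 ^ (m - n - 1) * 2 ^ n := by rw [← pow_add]; congr 1; omega
  have h2m1 : (0 : ℝ) < (2 : ℝ) ^ (m - 1) := by positivity
  have hq1 : ((qIdx (m - n) (j % 2 ^ (m - n)) : ℕ) : ℝ)
      ≤ foldPhi (r * 2 ^ n - ((j / 2 ^ (m - n) : ℕ) : ℝ)) * 2 ^ (m - n - 1) := by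
    have := hphi.1
    rw [div_le_iff₀ (by positivity : (0:ℝ) < (2:ℝ) ^ (m - n - 1))] at this
    exact this
  have hq2 : foldPhi (r * 2 ^ n - ((j / 2 ^ (m - n) : ℕ) : ℝ)) * 2 ^ (m - n - 1)
      ≤ ((qIdx (m - n) (j % 2 ^ (m - n)) : ℕ) : ℝ) + 1 := by
    have := hphi.2
    rw [le_div_iff₀ (by positivity : (0:ℝ) < (2:ℝ) ^ (m - n - 1))] at this
    exact this
  refine ⟨(((j / 2 ^ (m - n) : ℕ) : ℝ)
      + foldPhi (r * 2 ^ n - ((j / 2 ^ (m - n) : ℕ) : ℝ))) / 2 ^ n, ⟨?_, ?_⟩, rfl⟩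
  · rw [div_le_div_iff₀ h2m1 h2n]
    push_cast
    rw [hkey]
    have := mul_le_mul_of_nonneg_right hq1 h2n.le
    nlinarith
  · rw [div_le_div_iff₀ h2n h2m1]
    push_cast
    rw [hkey]
    have := mul_le_mul_of_nonneg_right hq2 h2n.le
    nlinarith

-- NEW: IsS1 consequences
lemma child_of {Δ : ℕ → ℕ → ℝ} (hΔ : IsS1 Δ) {n k : ℕ} (hk : k < 2 ^ (n + 1)) :
    Δ (n + 1) k = Δ (n + 1) (2 * (k / 2)) := by
  have h2 : k / 2 < 2 ^ n := by
    have hp : 2 ^ (n + 1) = 2 * 2 ^ n := by rw [pow_succ]; ring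
    omega
  have hcases : k = 2 * (k / 2) ∨ k = 2 * (k / 2) + 1 := by omega
  rcases hcases with h | h
  · conv_lhs => rw [h]
  · conv_lhs => rw [h]
    exact ((hΔ.2.2.1 n (k / 2) h2).1).symm

lemma child_half_le {Δ : ℕ → ℕ → ℝ} (hΔ : IsS1 Δ) {n a : ℕ} (ha : a < 2 ^ n) :
    Δ n a / 2 ≤ Δ (n + 1) (2 * a) := by
  rcases (hΔ.2.2.1 n a ha).2 with h | h
  · rw [h]
  · rw [h]; have := hΔ.2.1 n a ha; linarith

lemma div_lt_pow {m n j : ℕ} (hj : j < 2 ^ m) (h : n ≤ m) : j / 2 ^ (m - n) < 2 ^ n := by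
  apply Nat.div_lt_of_lt_mul
  have e : 2 ^ (m - n) * 2 ^ n = 2 ^ m := by rw [← pow_add]; congr 1; omega
  rw [e]; exact hj

lemma trunc_pos {Δ : ℕ → ℕ → ℝ} (hΔ : IsS1 Δ) (k m j : ℕ) (hj : j < 2 ^ m) :
    0 < trunc Δ k m j := by
  unfold trunc; split_ifs with h
  · exact hΔ.2.1 m j hj
  · exact div_pos (hΔ.2.1 k _ (div_lt_pow hj (by omega))) (by positivity)

-- the target arc
def tgt (Δ : ℕ → ℕ → ℝ) (n m j : ℕ) : ℕ × ℕ :=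
  if m ≤ n then (m, j)
  else if Δ (n + 1) (2 * (j / 2 ^ (m - n))) = Δ n (j / 2 ^ (m - n)) then
    (m - 1, (j / 2 ^ (m - n)) * 2 ^ (m - n - 1) + qIdx (m - n) (j % 2 ^ (m - n)))
  else (m, j)

lemma tgt_valid (Δ : ℕ → ℕ → ℝ) (n m j : ℕ) (hj : j < 2 ^ m) :
    (tgt Δ n m j).2 < 2 ^ (tgt Δ n m j).1 := by
  unfold tgt; split_ifs with h1 h2
  · exact hj
  · simp only
    have hi : j / 2 ^ (m - n) < 2 ^ n := div_lt_pow hj (by omega)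
    have hq := qIdx_lt (m - n) (j % 2 ^ (m - n)) (by omega) (Nat.mod_lt _ (by positivity))
    have hpow : 2 ^ (m - 1) = 2 ^ n * 2 ^ (m - n - 1) := by rw [← pow_add]; congr 1; omega
    calc (j / 2 ^ (m - n)) * 2 ^ (m - n - 1) + qIdx (m - n) (j % 2 ^ (m - n))
        < (j / 2 ^ (m - n)) * 2 ^ (m - n - 1) + 2 ^ (m - n - 1) := by omega
      _ = (j / 2 ^ (m - n) + 1) * 2 ^ (m - n - 1) := by ring
      _ ≤ 2 ^ n * 2 ^ (m - n - 1) := Nat.mul_le_mul_right _ (by omega)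
      _ = 2 ^ (m - 1) := hpow.symm
  · exact hj

lemma tgt_mapsTo (Δ : ℕ → ℕ → ℝ) (n m j : ℕ) (hj : j < 2 ^ m) :
    Set.MapsTo (foldMap Δ n) (dyadicArc m j)
      (dyadicArc (tgt Δ n m j).1 (tgt Δ n m j).2) := by
  unfold tgt; split_ifs with h1 h2
  · exact foldMap_mapsTo_le Δ n m j h1 hj
  · exact foldMap_mapsTo_fold Δ n m j (by omega) hj h2
  · intro x hx
    rw [foldMap_eq_self_of_ne Δ n m j (by omega) hj h2 x hx]
    exact hx

lemma tgt_weight {Δ : ℕ → ℕ → ℝ} (hΔ : IsS1 Δ) (n m j : ℕ) (hj : j < 2 ^ m) :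
    trunc Δ n (tgt Δ n m j).1 (tgt Δ n m j).2 ≤ trunc Δ (n + 1) m j := by
  unfold tgt
  split_ifs with h1 h2
  · simp only [trunc, if_pos h1, if_pos (h1.trans (Nat.le_succ n))]
    exact le_rfl
  · -- folding case
    have hmn : n < m := by omega
    have hi : j / 2 ^ (m - n) < 2 ^ n := div_lt_pow hj (by omega)
    have hq := qIdx_lt (m - n) (j % 2 ^ (m - n)) (by omega) (Nat.mod_lt _ (by positivity))
    rcases Nat.lt_or_ge (n + 1) m with hm2 | hm2
    · -- m ≥ n + 2
      have hsub : m - 1 - n = m - n - 1 := by omega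
      have hdivq : ((j / 2 ^ (m - n)) * 2 ^ (m - n - 1) + qIdx (m - n) (j % 2 ^ (m - n)))
          / 2 ^ (m - n - 1) = j / 2 ^ (m - n) := by
        rw [Nat.add_comm, Nat.add_mul_div_right _ _ (pow_pos (by norm_num : 0 < 2) _),
          Nat.div_eq_of_lt hq, Nat.zero_add]
      have e1 : trunc Δ n (m - 1)
          ((j / 2 ^ (m - n)) * 2 ^ (m - n - 1) + qIdx (m - n) (j % 2 ^ (m - n)))
          = Δ n (j / 2 ^ (m - n)) / 2 ^ (m - n - 1) := by
        simp only [trunc, if_neg (show ¬ m - 1 ≤ n by omega), hsub, hdivq]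
      have hsub2 : m - (n + 1) = m - n - 1 := by omega
      have hjlt : j / 2 ^ (m - n - 1) < 2 ^ (n + 1) := by
        apply Nat.div_lt_of_lt_mul
        have e : 2 ^ (m - n - 1) * 2 ^ (n + 1) = 2 ^ m := by rw [← pow_add]; congr 1; omega
        rw [e]; exact hj
      have hd2 : (j / 2 ^ (m - n - 1)) / 2 = j / 2 ^ (m - n) := by
        rw [Nat.div_div_eq_div_mul, ← pow_succ]
        congr 2
        omega
      have e2 : trunc Δ (n + 1) m j = Δ n (j / 2 ^ (m - n)) / 2 ^ (m - n - 1) := by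
        simp only [trunc, if_neg (show ¬ m ≤ n + 1 by omega), hsub2]
        rw [child_of hΔ hjlt, hd2, h2]
      rw [e1, e2]
    · -- m = n + 1
      have hm1 : m = n + 1 := by omega
      subst hm1
      have hsub : n + 1 - n = 1 := by omega
      have e1 : trunc Δ n (n + 1 - 1)
          ((j / 2 ^ (n + 1 - n)) * 2 ^ (n + 1 - n - 1) + qIdx (n + 1 - n) (j % 2 ^ (n + 1 - n)))
          = Δ n (j / 2) := by
        simp only [hsub, Nat.add_sub_cancel]
        simp only [trunc, if_pos (le_refl n)]
        norm_num [qIdx]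
      have e2 : trunc Δ (n + 1) (n + 1) j = Δ (n + 1) j := by
        simp only [trunc, if_pos (le_refl (n + 1))]
      rw [e1, e2, child_of hΔ hj]
      rw [hsub] at h2
      simp only [pow_one] at h2
      rw [h2]
  · -- identity case, n < m
    have hmn : n < m := by omega
    have hi : j / 2 ^ (m - n) < 2 ^ n := div_lt_pow hj (by omega)
    rcases Nat.lt_or_ge (n + 1) m with hm2 | hm2
    · simp only [trunc, if_neg (show ¬ m ≤ n by omega), if_neg (show ¬ m ≤ n + 1 by omega)]
      have hjlt : j / 2 ^ (m - (n + 1)) < 2 ^ (n + 1) := by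
        apply Nat.div_lt_of_lt_mul
        have e : 2 ^ (m - (n + 1)) * 2 ^ (n + 1) = 2 ^ m := by rw [← pow_add]; congr 1; omega
        rw [e]; exact hj
      have hd2 : (j / 2 ^ (m - (n + 1))) / 2 = j / 2 ^ (m - n) := by
        rw [Nat.div_div_eq_div_mul, ← pow_succ]
        congr 2
        omega
      rw [child_of hΔ hjlt, hd2]
      have hhalf := child_half_le hΔ hi
      have hb : (0:ℝ) < (2:ℝ) ^ (m - (n + 1)) := by positivity
      have hbm : (0:ℝ) < (2:ℝ) ^ (m - n) := by positivity
      rw [div_le_div_iff₀ hbm hb]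
      have hpows : (2:ℝ) ^ (m - n) = 2 ^ (m - (n + 1)) * 2 := by rw [← pow_succ]; congr 1; omega
      have hkey := mul_le_mul_of_nonneg_right
        (by linarith : Δ n (j / 2 ^ (m - n)) ≤ Δ (n + 1) (2 * (j / 2 ^ (m - n))) * 2) hb.le
      rw [hpows]
      nlinarith
    · have hm1 : m = n + 1 := by omega
      subst hm1
      simp only [trunc, if_neg (show ¬ n + 1 ≤ n by omega), if_pos (le_refl (n + 1))]
      have hsub : n + 1 - n = 1 := by omega
      rw [hsub, pow_one, pow_one, child_of hΔ hj]
      have hja : j / 2 < 2 ^ n := by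
        have e : 2 ^ (n + 1) = 2 * 2 ^ n := by rw [pow_succ]; ring
        omega
      exact child_half_le hΔ hja

-- topology
lemma dyadicArc_nonempty (m j : ℕ) : (dyadicArc m j).Nonempty := by
  refine ⟨_, ⟨(j : ℝ) / 2 ^ m, ⟨le_refl _, ?_⟩, rfl⟩⟩
  gcongr
  linarith

lemma isClosed_dyadicArc (m j : ℕ) : IsClosed (dyadicArc m j) :=
  (isCompact_Icc.image (AddCircle.continuous_mk' 1)).isClosed

lemma isPreconnected_dyadicArc (m j : ℕ) : IsPreconnected (dyadicArc m j) :=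
  isPreconnected_Icc.image _ (AddCircle.continuous_mk' 1).continuousOn

lemma conn_transfer {ι : Type*} [Finite ι] (K K' : ι → Set (AddCircle (1:ℝ)))
    (f : AddCircle (1:ℝ) → AddCircle (1:ℝ))
    (hKcl : ∀ k, IsClosed (K k)) (hK'cl : ∀ k, IsClosed (K' k))
    (hK'pc : ∀ k, IsPreconnected (K' k))
    (hKne : ∀ k, (K k).Nonempty)
    (hmap : ∀ k, Set.MapsTo f (K k) (K' k))
    (hconn : IsConnected (⋃ k, K k)) :
    IsConnected (⋃ k, K' k) := by
  have hne' : (⋃ k, K' k).Nonempty := by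
    obtain ⟨x, hx⟩ := hconn.nonempty
    obtain ⟨k, hk⟩ := Set.mem_iUnion.mp hx
    exact ⟨f x, Set.mem_iUnion.mpr ⟨k, hmap k hk⟩⟩
  refine ⟨hne', ?_⟩
  rw [isPreconnected_iff_subset_of_fully_disjoint_closed
    (isClosed_iUnion_of_finite hK'cl)]
  intro u v hu hv hsub hdisj
  have hdich : ∀ k, K' k ⊆ u ∨ K' k ⊆ v := fun k =>
    (isPreconnected_iff_subset_of_fully_disjoint_closed (hK'cl k)).mp (hK'pc k) u v hu hv
      ((Set.subset_iUnion K' k).trans hsub) hdisj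
  have hABcover : (⋃ k, K k) ⊆ (⋃ k : {k : ι // K' k ⊆ u}, K k)
      ∪ (⋃ k : {k : ι // ¬ K' k ⊆ u}, K k) := by
    intro z hz
    obtain ⟨k, hk⟩ := Set.mem_iUnion.mp hz
    by_cases h : K' k ⊆ u
    · exact Or.inl (Set.mem_iUnion.mpr ⟨⟨k, h⟩, hk⟩)
    · exact Or.inr (Set.mem_iUnion.mpr ⟨⟨k, h⟩, hk⟩)
  have hdisjAB : Disjoint (⋃ k : {k : ι // K' k ⊆ u}, K k)
      (⋃ k : {k : ι // ¬ K' k ⊆ u}, K k) := by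
    rw [Set.disjoint_left]
    intro z hzA hzB
    obtain ⟨⟨k, hk⟩, hzk⟩ := Set.mem_iUnion.mp hzA
    obtain ⟨⟨l, hl⟩, hzl⟩ := Set.mem_iUnion.mp hzB
    have hfu : f z ∈ u := hk (hmap k hzk)
    have hfv : f z ∈ v := ((hdich l).resolve_left hl) (hmap l hzl)
    exact Set.disjoint_left.mp hdisj hfu hfv
  have := (isPreconnected_iff_subset_of_fully_disjoint_closed
      (isClosed_iUnion_of_finite hKcl)).mp hconn.isPreconnected
      (⋃ k : {k : ι // K' k ⊆ u}, K k) (⋃ k : {k : ι // ¬ K' k ⊆ u}, K k)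
      (isClosed_iUnion_of_finite fun k => hKcl k)
      (isClosed_iUnion_of_finite fun k => hKcl k) hABcover hdisjAB
  rcases this with hA | hB
  · left
    rw [Set.iUnion_subset_iff]
    intro k
    rcases hdich k with h | h
    · exact h
    · exfalso
      obtain ⟨z, hz⟩ := hKne k
      have hzA := hA (Set.mem_iUnion.mpr ⟨k, hz⟩)
      obtain ⟨⟨l, hl⟩, hzl⟩ := Set.mem_iUnion.mp hzA
      exact Set.disjoint_left.mp hdisj (hl (hmap l hzl)) (h (hmap k hz))
  · right
    rw [Set.iUnion_subset_iff]
    intro k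
    rcases hdich k with h | h
    · exfalso
      obtain ⟨z, hz⟩ := hKne k
      have hzB := hB (Set.mem_iUnion.mpr ⟨k, hz⟩)
      obtain ⟨⟨l, hl⟩, hzl⟩ := Set.mem_iUnion.mp hzB
      have hlv : K' l ⊆ v := (hdich l).resolve_left hl
      exact Set.disjoint_left.mp hdisj (h (hmap k hz)) (hlv (hmap l hzl))
    · exact h

-- chain plumbing
lemma mem_dyadicArc_zero (x : AddCircle (1:ℝ)) : x ∈ dyadicArc 0 0 := by
  refine ⟨circRep x, ⟨?_, ?_⟩, coe_circRep x⟩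
  · simpa using (circRep_mem x).1
  · have := (circRep_mem x).2
    norm_num
    linarith

lemma chainSums_nonempty (Δ' : ℕ → ℕ → ℝ) (x y : AddCircle (1:ℝ)) :
    (chainSums Δ' x y).Nonempty := by
  refine ⟨∑ _k : Fin 1, Δ' 0 0, 0, fun _ => (0, 0), ⟨?_, ?_, ?_, ?_⟩, rfl⟩
  · intro k; norm_num
  · simp only [Set.iUnion_const]
    exact ⟨dyadicArc_nonempty 0 0, isPreconnected_dyadicArc 0 0⟩
  · exact Set.mem_iUnion.mpr ⟨0, mem_dyadicArc_zero x⟩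
  · exact Set.mem_iUnion.mpr ⟨0, mem_dyadicArc_zero y⟩

lemma chainSums_nonneg {Δ : ℕ → ℕ → ℝ} (hΔ : IsS1 Δ) (k : ℕ) (x y : AddCircle (1:ℝ)) :
    ∀ s ∈ chainSums (trunc Δ k) x y, 0 ≤ s := by
  rintro s ⟨N, c, hc, rfl⟩
  exact Finset.sum_nonneg fun t _ => (trunc_pos hΔ k _ _ (hc.1 t)).le


/-- For each `n`, the map `f_n : Γ_{n+1} → Γ_n` is `1`-Lipschitz:
`d_n(f_n x, f_n y) ≤ d_{n+1}(x, y)` for all `x, y ∈ 𝕊`. -/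
theorem foldMap_one_lipschitz (Δ : ℕ → ℕ → ℝ) (hΔ : IsS1 Δ) (n : ℕ)
    (x y : AddCircle (1 : ℝ)) :
    dOf (trunc Δ n) (foldMap Δ n x) (foldMap Δ n y) ≤ dOf (trunc Δ (n + 1)) x y := by
  apply le_csInf (chainSums_nonempty _ x y)
  rintro b ⟨N, c, hc, rfl⟩
  have hvalid : ∀ k, (tgt Δ n (c k).1 (c k).2).2 < 2 ^ (tgt Δ n (c k).1 (c k).2).1 :=
    fun k => tgt_valid Δ n _ _ (hc.1 k)
  have hmap : ∀ k, Set.MapsTo (foldMap Δ n) (dyadicArc (c k).1 (c k).2)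
      (dyadicArc (tgt Δ n (c k).1 (c k).2).1 (tgt Δ n (c k).1 (c k).2).2) :=
    fun k => tgt_mapsTo Δ n _ _ (hc.1 k)
  have hchain : IsDyadicChain N (fun k => tgt Δ n (c k).1 (c k).2)
      (foldMap Δ n x) (foldMap Δ n y) := by
    refine ⟨hvalid, ?_, ?_, ?_⟩
    · exact conn_transfer _ _ (foldMap Δ n) (fun k => isClosed_dyadicArc _ _)
        (fun k => isClosed_dyadicArc _ _) (fun k => isPreconnected_dyadicArc _ _)
        (fun k => dyadicArc_nonempty _ _) hmap hc.2.1
    · obtain ⟨k, hk⟩ := Set.mem_iUnion.mp hc.2.2.1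
      exact Set.mem_iUnion.mpr ⟨k, hmap k hk⟩
    · obtain ⟨k, hk⟩ := Set.mem_iUnion.mp hc.2.2.2
      exact Set.mem_iUnion.mpr ⟨k, hmap k hk⟩
  calc dOf (trunc Δ n) (foldMap Δ n x) (foldMap Δ n y)
      ≤ ∑ k, trunc Δ n (tgt Δ n (c k).1 (c k).2).1 (tgt Δ n (c k).1 (c k).2).2 :=
        csInf_le ⟨0, fun s hs => chainSums_nonneg hΔ n _ _ s hs⟩
          ⟨N, fun k => tgt Δ n (c k).1 (c k).2, hchain, rfl⟩
    _ ≤ ∑ k, trunc Δ (n + 1) (c k).1 (c k).2 :=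
        Finset.sum_le_sum fun k _ => tgt_weight hΔ n _ _ (hc.1 k)
end
end
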